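/- arXiv:1807.10525 — 11 statements merged into one kernel-verified Lean document; each statement's English description precedes it below -/
import Mathlib

section
/- Let m ≥ 1 and let u, v ∈ 𝔽₂^m. There exists a symmetric m×m matrix S over 𝔽₂ with zero diagonal such that S·u = v if and only if either u = v = 0, or u ≠ 0 and uᵀv = 0. -/
open Matrix

theorem stmt0 (m : ℕ) (hm : 1 ≤ m) (u v : Fin m → ZMod 2) :
    (∃ S : Matrix (Fin m) (Fin m) (ZMod 2),
        S.IsSymm ∧ (∀ i, S i i = 0) ∧ S.mulVec u = v)
    ↔ ((u = 0 ∧ v = 0) ∨ (u ≠ 0 ∧ u ⬝ᵥ v = 0)) := by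
  constructor
  · rintro ⟨S, hsymm, hdiag, hmul⟩
    by_cases hu : u = 0
    · refine Or.inl ⟨hu, ?_⟩
      subst hu
      rw [← hmul]
      ext i
      simp [Matrix.mulVec, dotProduct]
    · refine Or.inr ⟨hu, ?_⟩
      have hx : u ⬝ᵥ v = ∑ q ∈ Finset.univ ×ˢ Finset.univ, u q.1 * S q.1 q.2 * u q.2 := by
        rw [← hmul]
        simp only [dotProduct, Matrix.mulVec, Finset.mul_sum, Finset.sum_product,
          mul_assoc]
      rw [hx]
      refine Finset.sum_involution (fun q _ => (q.2, q.1)) ?_ ?_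
        (fun q h => Finset.mem_univ _) (fun q h => rfl)
      · intro q _
        have h1 : S q.2 q.1 = S q.1 q.2 := hsymm.apply q.1 q.2
        rw [h1, show u q.2 * S q.1 q.2 * u q.1 = u q.1 * S q.1 q.2 * u q.2 by ring,
          CharTwo.add_self_eq_zero]
      · intro q _ hne heq
        apply hne
        have h2 : q.2 = q.1 := congrArg Prod.fst heq
        rw [← h2, hdiag]
        ring
  · rintro (⟨hu, hv⟩ | ⟨hu, huv⟩)
    · subst hu; subst hv
      refine ⟨0, ?_, by simp, ?_⟩
      · simp [Matrix.IsSymm]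
      · ext i; simp [Matrix.mulVec, dotProduct]
    · obtain ⟨p, hp⟩ := Function.ne_iff.mp hu
      have hp1 : u p = 1 := by
        have hgen : ∀ x : ZMod 2, x ≠ 0 → x = 1 := by decide
        exact hgen _ (by simpa using hp)
      set w : Fin m → ZMod 2 := Function.update v p 0 with hw
      refine ⟨fun i j => (if i = p then w j else 0) + (if j = p then w i else 0), ?_, ?_, ?_⟩
      · ext i j
        change (if j = p then w i else 0) + (if i = p then w j else 0) = _
        ring
      · intro i
        by_cases hip : i = p
        · subst hip
          simp [hw, Function.update_self]
        · simp [hip]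
      · have hwu : ∑ j, w j * u j = v p := by
          have h1 : ∑ j, w j * u j = ∑ j ∈ Finset.univ.erase p, w j * u j + w p * u p := by
            rw [Finset.sum_erase_add _ _ (Finset.mem_univ p)]
          have h2 : ∑ j, u j * v j = ∑ j ∈ Finset.univ.erase p, u j * v j + u p * v p := by
            rw [Finset.sum_erase_add _ _ (Finset.mem_univ p)]
          have h3 : ∑ j ∈ Finset.univ.erase p, w j * u j
              = ∑ j ∈ Finset.univ.erase p, u j * v j := by
            refine Finset.sum_congr rfl fun j hj => ?_
            rw [hw, Function.update_of_ne (Finset.ne_of_mem_erase hj), mul_comm]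
          have h4 : (0 : ZMod 2) = ∑ j ∈ Finset.univ.erase p, u j * v j + v p := by
            rw [← huv]
            simp only [dotProduct] at *
            rw [h2, hp1, one_mul]
          have h5 : w p = 0 := by simp [hw]
          rw [h1, h3, h5, zero_mul, add_zero]
          have h6 := h4.symm
          calc ∑ j ∈ Finset.univ.erase p, u j * v j
              = (∑ j ∈ Finset.univ.erase p, u j * v j + v p) + v p := by
                rw [add_assoc, CharTwo.add_self_eq_zero, add_zero]
            _ = v p := by rw [h6, zero_add]
        ext i
        simp only [Matrix.mulVec, dotProduct]
        have hsum : ∑ j, ((if i = p then w j else 0) + (if j = p then w i else 0)) * u j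
            = (if i = p then ∑ j, w j * u j else 0) + w i * u p := by
          simp only [add_mul, Finset.sum_add_distrib, ite_mul, zero_mul]
          congr 1
          · split_ifs with h <;> simp
          · rw [Finset.sum_ite_eq' Finset.univ p (fun j => w i * u j)]
            simp
        rw [hsum, hwu, hp1, mul_one]
        by_cases hip : i = p
        · subst hip
          simp [hw]
        · simp [hip, hw, Function.update_of_ne hip]
end

section
/- Let M be an invertible 2m×2m matrix over 𝔽₂ that preserves Q_m = {(x,y) : xᵀy = 0} and S_m = {(x,0) : x ∈ 𝔽₂^m} setwise. Then there exist an invertible m×m matrix A over 𝔽₂ and a symmetric m×m matrix S with zero diagonal such that M = [[A, AS],[0, (Aᵀ)⁻¹]] in block form. -/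
open Matrix

private lemma hyper {m : ℕ} (a b : Fin m → ZMod 2) (c : ZMod 2)
    (h : ∀ x : Fin m → ZMod 2, x ⬝ᵥ a + c = 0 ↔ x ⬝ᵥ b = 0) : a = b ∧ c = 0 := by
  have hc : c = 0 := by
    have := (h 0).mpr (by simp)
    simpa using this
  subst hc
  refine ⟨?_, rfl⟩
  funext j
  have := h (Pi.single j 1)
  simp only [add_zero, single_dotProduct, one_mul] at this
  have key : ∀ u v : ZMod 2, ((u = 0 ↔ v = 0) → u = v) := by decide
  exact key _ _ this

private lemma quadzero {m : ℕ} (C : Matrix (Fin m) (Fin m) (ZMod 2))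
    (h : ∀ y : Fin m → ZMod 2, y ⬝ᵥ C *ᵥ y = 0) :
    (∀ i, C i i = 0) ∧ (∀ i j, C i j = C j i) := by
  have hdiag : ∀ i, C i i = 0 := by
    intro i
    have := h (Pi.single i 1)
    simpa [single_dotProduct, Matrix.mulVec_single] using this
  refine ⟨hdiag, fun i j => ?_⟩
  rcases eq_or_ne i j with rfl | hij
  · rfl
  · have := h (Pi.single i 1 + Pi.single j 1)
    rw [Matrix.mulVec_add, add_dotProduct, dotProduct_add,
      dotProduct_add] at this
    simp only [single_dotProduct, one_mul, Matrix.mulVec_single_one, Matrix.col_apply, mul_one] at this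
    rw [hdiag i, hdiag j] at this
    have h2 : C i j + C j i = 0 := by linear_combination this
    have key : ∀ u v : ZMod 2, u + v = 0 → u = v := by decide
    exact key _ _ h2


theorem stmt2 (m : ℕ) (M : Matrix (Fin m ⊕ Fin m) (Fin m ⊕ Fin m) (ZMod 2))
    (hM : IsUnit M)
    (hQ : M.mulVec '' {v : Fin m ⊕ Fin m → ZMod 2 |
          (fun i => v (Sum.inl i)) ⬝ᵥ (fun i => v (Sum.inr i)) = 0}
      = {v : Fin m ⊕ Fin m → ZMod 2 |
          (fun i => v (Sum.inl i)) ⬝ᵥ (fun i => v (Sum.inr i)) = 0})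
    (hSm : M.mulVec '' {v : Fin m ⊕ Fin m → ZMod 2 | ∀ i, v (Sum.inr i) = 0}
      = {v : Fin m ⊕ Fin m → ZMod 2 | ∀ i, v (Sum.inr i) = 0}) :
    ∃ A S : Matrix (Fin m) (Fin m) (ZMod 2),
      IsUnit A ∧ S.IsSymm ∧ (∀ i, S i i = 0) ∧
      M = Matrix.fromBlocks A (A * S) 0 Aᵀ⁻¹ := by
  -- M is injective on vectors
  have hdet : IsUnit M.det := (Matrix.isUnit_iff_isUnit_det M).mp hM
  have hinj : Function.Injective M.mulVec := by
    intro v w h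
    have : M⁻¹ *ᵥ (M *ᵥ v) = M⁻¹ *ᵥ (M *ᵥ w) := by rw [h]
    simpa [Matrix.mulVec_mulVec, Matrix.nonsing_inv_mul M hdet] using this
  have memiff : ∀ (s : Set (Fin m ⊕ Fin m → ZMod 2)), M.mulVec '' s = s →
      ∀ v, M.mulVec v ∈ s ↔ v ∈ s := by
    intro s hs v
    constructor
    · intro hv
      rw [← hs] at hv
      obtain ⟨w, hw, hwv⟩ := hv
      rwa [← hinj hwv]
    · intro hv
      rw [← hs]
      exact ⟨v, hv, rfl⟩
  -- lower left block is zero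
  set A := M.toBlocks₁₁ with hA
  set B := M.toBlocks₁₂ with hB
  set D := M.toBlocks₂₂ with hD
  have hzero : M.toBlocks₂₁ = 0 := by
    ext i j
    have hv : (Pi.single (Sum.inl j) 1 : Fin m ⊕ Fin m → ZMod 2) ∈
        {v : Fin m ⊕ Fin m → ZMod 2 | ∀ i, v (Sum.inr i) = 0} := by
      intro k
      exact Pi.single_eq_of_ne (by simp) 1
    have := ((memiff _ hSm _).mpr hv) i
    simpa [Matrix.mulVec_single, Matrix.toBlocks₂₁] using this
  have hMblock : M = Matrix.fromBlocks A B 0 D := by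
    rw [hA, hB, hD, ← hzero, Matrix.fromBlocks_toBlocks]
  -- A and D are invertible
  have hAD : IsUnit A.det ∧ IsUnit D.det := by
    have : IsUnit (A.det * D.det) := by
      rw [← Matrix.det_fromBlocks_zero₂₁, ← hMblock]; exact hdet
    exact ⟨isUnit_of_mul_isUnit_left this, isUnit_of_mul_isUnit_right this⟩
  -- the quadric condition, in block terms
  have hquad : ∀ x y : Fin m → ZMod 2,
      x ⬝ᵥ (Aᵀ * D) *ᵥ y + (B *ᵥ y) ⬝ᵥ (D *ᵥ y) = 0 ↔ x ⬝ᵥ y = 0 := by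
    intro x y
    have := memiff _ hQ (Sum.elim x y)
    simp only [Set.mem_setOf_eq, Sum.elim_inl, Sum.elim_inr] at this
    rw [hMblock, Matrix.fromBlocks_mulVec] at this
    simp only [Sum.elim_inl, Sum.elim_inr, Matrix.zero_mulVec, zero_add,
      Sum.elim_comp_inl, Sum.elim_comp_inr] at this
    convert this using 2
    rw [add_dotProduct]
    congr 1
    rw [← Matrix.mulVec_mulVec, Matrix.dotProduct_mulVec, Matrix.vecMul_transpose]
  have hADy : ∀ y, (Aᵀ * D) *ᵥ y = y ∧ (B *ᵥ y) ⬝ᵥ (D *ᵥ y) = 0 := by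
    intro y
    have := hyper ((Aᵀ * D) *ᵥ y) y ((B *ᵥ y) ⬝ᵥ (D *ᵥ y)) (fun x => hquad x y)
    exact this
  have hAD1 : Aᵀ * D = 1 := by
    ext i j
    have := congrFun ((hADy (Pi.single j 1)).1) i
    simpa [Matrix.mulVec_single, Matrix.one_apply, Pi.single_apply] using this
  have hDinv : Aᵀ⁻¹ = D := Matrix.inv_eq_right_inv hAD1
  -- the symmetric part
  have hCquad : ∀ y : Fin m → ZMod 2, y ⬝ᵥ (Bᵀ * D) *ᵥ y = 0 := by
    intro y
    have := (hADy y).2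
    rw [← this, ← Matrix.mulVec_mulVec, Matrix.dotProduct_mulVec, Matrix.vecMul_transpose]
  obtain ⟨hCdiag, hCsymm⟩ := quadzero (Bᵀ * D) hCquad
  refine ⟨A, A⁻¹ * B, (Matrix.isUnit_iff_isUnit_det A).mpr hAD.1, ?_, ?_, ?_⟩
  · -- symmetry : (A⁻¹ * B)ᵀ = A⁻¹ * B
    have hST : (A⁻¹ * B)ᵀ = Bᵀ * D := by
      rw [Matrix.transpose_mul, Matrix.transpose_nonsing_inv, hDinv]
    have hCT : (Bᵀ * D)ᵀ = Bᵀ * D := by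
      ext i j
      rw [Matrix.transpose_apply]
      exact hCsymm j i
    show (A⁻¹ * B)ᵀ = A⁻¹ * B
    rw [hST, ← hCT, ← hST, Matrix.transpose_transpose]
  · intro i
    have hST : (A⁻¹ * B)ᵀ = Bᵀ * D := by
      rw [Matrix.transpose_mul, Matrix.transpose_nonsing_inv, hDinv]
    have : (A⁻¹ * B)ᵀ i i = 0 := by rw [hST]; exact hCdiag i
    simpa using this
  · rw [hMblock, hDinv]
    rw [← mul_assoc, Matrix.mul_nonsing_inv A hAD.1, one_mul]
end

section
/- Let m ≥ 1 and let H_m be the group of invertible 2m×2m matrices over 𝔽₂ of the form [[A, AS],[0, (Aᵀ)⁻¹]] with A ∈ GL(m,2) and S symmetric with zero diagonal. Then H_m acts transitively on the set Q_m \ S_m = {(x,y) ∈ 𝔽₂^m × 𝔽₂^m : xᵀy = 0, y ≠ 0}. -/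
open Matrix

/-- Membership in the group `H_m` of matrices `[[A, AS],[0,(Aᵀ)⁻¹]]` with `A`
invertible and `S` symmetric with zero diagonal. -/
def InH (m : ℕ) (M : Matrix (Fin m ⊕ Fin m) (Fin m ⊕ Fin m) (ZMod 2)) : Prop :=
  ∃ A S : Matrix (Fin m) (Fin m) (ZMod 2),
    IsUnit A ∧ S.IsSymm ∧ (∀ i, S i i = 0) ∧
    M = Matrix.fromBlocks A (A * S) 0 Aᵀ⁻¹

/-- A "shear" linear automorphism `z ↦ z + z k • c`, an involution when `c k = 0`. -/
noncomputable def shear (m : ℕ) (k : Fin m) (c : Fin m → ZMod 2) (hc : c k = 0) :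
    (Fin m → ZMod 2) ≃ₗ[ZMod 2] (Fin m → ZMod 2) :=
  let L : (Fin m → ZMod 2) →ₗ[ZMod 2] (Fin m → ZMod 2) :=
    LinearMap.id + (LinearMap.proj k).smulRight c
  have hL : ∀ z, L z = z + z k • c := fun z => rfl
  have hinv : L ∘ₗ L = LinearMap.id := by
    apply LinearMap.ext; intro z
    simp only [LinearMap.comp_apply, hL, LinearMap.id_apply]
    have hzk : (z + z k • c) k = z k := by
      simp [hc]
    rw [hzk, add_assoc, ← add_smul, CharTwo.add_self_eq_zero, zero_smul, add_zero]
  LinearEquiv.ofLinear L L hinv hinv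

lemma add_self_vec {m : ℕ} (f : Fin m → ZMod 2) : f + f = 0 := by
  funext i; simp [CharTwo.add_self_eq_zero]

lemma shear_apply (m : ℕ) (k : Fin m) (c : Fin m → ZMod 2) (hc : c k = 0)
    (z : Fin m → ZMod 2) : shear m k c hc z = z + z k • c := rfl

lemma zmod2_ne_zero {a : ZMod 2} (h : a ≠ 0) : a = 1 := by revert h; revert a; decide

/-- Any vector with a `1` in position `k` can be mapped to `Pi.single k0 1`. -/
lemma exists_equiv_single (m : ℕ) (y : Fin m → ZMod 2) (k : Fin m) (hk : y k = 1)
    (k0 : Fin m) :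
    ∃ g : (Fin m → ZMod 2) ≃ₗ[ZMod 2] (Fin m → ZMod 2), g y = Pi.single k0 1 := by
  have hc1 : ((y + Pi.single k 1 : Fin m → ZMod 2)) k = 0 := by
    simp only [Pi.add_apply, hk, Pi.single_eq_same]
    decide
  have g1 := shear m k (y + Pi.single k 1) hc1
  have hg1 : (shear m k (y + Pi.single k 1) hc1) y = Pi.single k 1 := by
    rw [shear_apply, hk, one_smul, ← add_assoc, add_self_vec, zero_add]
  by_cases hkk : k = k0
  · subst hkk
    exact ⟨shear m k (y + Pi.single k 1) hc1, hg1⟩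
  · have hc2 : ((Pi.single k0 1 : Fin m → ZMod 2)) k = 0 := by
      simp [Pi.single_apply, Ne.symm hkk]
    have hc3 : ((Pi.single k 1 : Fin m → ZMod 2)) k0 = 0 := by
      simp [Pi.single_apply, hkk]
    have hg2 : (shear m k (Pi.single k0 1) hc2) (Pi.single k 1)
        = Pi.single k 1 + Pi.single k0 1 := by
      rw [shear_apply]
      simp
    have hg3 : (shear m k0 (Pi.single k 1) hc3) (Pi.single k 1 + Pi.single k0 1)
        = Pi.single k0 1 := by
      rw [shear_apply]
      have : ((Pi.single k 1 + Pi.single k0 1 : Fin m → ZMod 2)) k0 = 1 := by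
        simp [Pi.single_apply, hkk]
      rw [this, one_smul]
      have habab : ∀ a b : Fin m → ZMod 2, a + b + a = b := fun a b => by
        rw [add_comm a b, add_assoc, add_self_vec, add_zero]
      exact habab _ _
    refine ⟨(shear m k (y + Pi.single k 1) hc1).trans
      ((shear m k (Pi.single k0 1) hc2).trans (shear m k0 (Pi.single k 1) hc3)), ?_⟩
    simp only [LinearEquiv.trans_apply, hg1, hg2, hg3]

/-- GL transitivity on nonzero vectors, in linear-equiv form. -/
lemma exists_equiv (m : ℕ) (y y' : Fin m → ZMod 2) (hy : y ≠ 0) (hy' : y' ≠ 0) :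
    ∃ g : (Fin m → ZMod 2) ≃ₗ[ZMod 2] (Fin m → ZMod 2), g y = y' := by
  obtain ⟨k, hk⟩ : ∃ k, y k ≠ 0 := Function.ne_iff.mp hy
  obtain ⟨k', hk'⟩ : ∃ k', y' k' ≠ 0 := Function.ne_iff.mp hy'
  obtain ⟨g, hg⟩ := exists_equiv_single m y k (zmod2_ne_zero hk) k
  obtain ⟨g', hg'⟩ := exists_equiv_single m y' k' (zmod2_ne_zero hk') k
  refine ⟨g.trans g'.symm, ?_⟩
  simp only [LinearEquiv.trans_apply, hg]
  exact g'.symm_apply_eq.mpr hg'.symm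

/-- Existence of a symmetric zero-diagonal matrix with prescribed value on `y`. -/
lemma exists_S (m : ℕ) (y u : Fin m → ZMod 2) (k : Fin m) (hk : y k = 1)
    (hu : u ⬝ᵥ y = 0) :
    ∃ S : Matrix (Fin m) (Fin m) (ZMod 2), S.IsSymm ∧ (∀ i, S i i = 0) ∧ S *ᵥ y = u := by
  refine ⟨Matrix.of fun i j => u i * (if j = k then 1 else 0)
      + (if i = k then 1 else 0) * u j, ?_, ?_, ?_⟩
  · unfold Matrix.IsSymm
    ext i j
    simp only [Matrix.transpose_apply, Matrix.of_apply]
    ring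
  · intro i
    by_cases h : i = k
    · subst h; simp [CharTwo.add_self_eq_zero]
    · simp [h]
  · funext i
    simp only [Matrix.mulVec, dotProduct, Matrix.of_apply, add_mul]
    rw [Finset.sum_add_distrib]
    have h1 : ∑ j, u i * (if j = k then 1 else 0) * y j = u i := by
      simp only [mul_ite, mul_one, mul_zero, ite_mul, zero_mul]
      rw [Finset.sum_ite_eq' Finset.univ k (fun j => u i * y j)]
      simp [hk]
    have hu' : ∑ j, u j * y j = 0 := hu
    have h2 : ∑ j, (if i = k then 1 else 0) * u j * y j = 0 := by
      calc ∑ j, (if i = k then (1:ZMod 2) else 0) * u j * y j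
          = (if i = k then (1:ZMod 2) else 0) * ∑ j, u j * y j := by
            rw [Finset.mul_sum]; exact Finset.sum_congr rfl fun j _ => by ring
        _ = 0 := by rw [hu']; ring
    rw [h1, h2, add_zero]

theorem stmt5 (m : ℕ) (hm : 1 ≤ m) (v w : Fin m ⊕ Fin m → ZMod 2)
    (hv : (fun i => v (Sum.inl i)) ⬝ᵥ (fun i => v (Sum.inr i)) = 0 ∧
          (fun i => v (Sum.inr i)) ≠ 0)
    (hw : (fun i => w (Sum.inl i)) ⬝ᵥ (fun i => w (Sum.inr i)) = 0 ∧
          (fun i => w (Sum.inr i)) ≠ 0) :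
    ∃ M, InH m M ∧ M.mulVec v = w := by
  obtain ⟨hv1, hv2⟩ := hv
  obtain ⟨hw1, hw2⟩ := hw
  set x : Fin m → ZMod 2 := fun i => v (Sum.inl i) with hx
  set y : Fin m → ZMod 2 := fun i => v (Sum.inr i) with hy
  set x' : Fin m → ZMod 2 := fun i => w (Sum.inl i) with hx'
  set y' : Fin m → ZMod 2 := fun i => w (Sum.inr i) with hy'
  obtain ⟨g, hg⟩ := exists_equiv m y y' hv2 hw2
  set B : Matrix (Fin m) (Fin m) (ZMod 2) := LinearMap.toMatrix' g.toLinearMap with hB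
  set B' : Matrix (Fin m) (Fin m) (ZMod 2) :=
    LinearMap.toMatrix' g.symm.toLinearMap with hB'
  have hcomp1 : g.toLinearMap ∘ₗ g.symm.toLinearMap = LinearMap.id := by
    ext z; simp
  have hcomp2 : g.symm.toLinearMap ∘ₗ g.toLinearMap = LinearMap.id := by
    ext z; simp
  have hBB' : B * B' = 1 := by
    rw [hB, hB', ← LinearMap.toMatrix'_comp, hcomp1, LinearMap.toMatrix'_id]
  have hB'B : B' * B = 1 := by
    rw [hB, hB', ← LinearMap.toMatrix'_comp, hcomp2, LinearMap.toMatrix'_id]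
  set A : Matrix (Fin m) (Fin m) (ZMod 2) := B'ᵀ with hA
  have hABt : A * Bᵀ = 1 := by
    rw [hA, ← Matrix.transpose_mul, hBB', Matrix.transpose_one]
  have hBtA : Bᵀ * A = 1 := by
    rw [hA, ← Matrix.transpose_mul, hB'B, Matrix.transpose_one]
  have hAunit : IsUnit A := ⟨⟨A, Bᵀ, hABt, hBtA⟩, rfl⟩
  have hAtinv : Aᵀ⁻¹ = B := by
    rw [hA, Matrix.transpose_transpose]
    exact Matrix.inv_eq_right_inv hB'B
  have hBy : B *ᵥ y = y' := by
    rw [← Matrix.toLin'_apply, hB, Matrix.toLin'_toMatrix']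
    exact hg
  set u : Fin m → ZMod 2 := x + Bᵀ *ᵥ x' with hu_def
  have hu : u ⬝ᵥ y = 0 := by
    rw [hu_def, add_dotProduct]
    have h1 : x ⬝ᵥ y = 0 := hv1
    have h2 : (Bᵀ *ᵥ x') ⬝ᵥ y = 0 := by
      rw [dotProduct_comm, Matrix.dotProduct_mulVec, Matrix.vecMul_transpose, hBy,
        dotProduct_comm]
      exact hw1
    rw [h1, h2, add_zero]
  obtain ⟨k, hk⟩ : ∃ k, y k ≠ 0 := Function.ne_iff.mp hv2
  obtain ⟨S, hSsym, hSdiag, hSy⟩ := exists_S m y u k (zmod2_ne_zero hk) hu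
  refine ⟨Matrix.fromBlocks A (A * S) 0 Aᵀ⁻¹, ⟨A, S, hAunit, hSsym, hSdiag, rfl⟩, ?_⟩
  rw [Matrix.fromBlocks_mulVec]
  have hvl : v ∘ Sum.inl = x := rfl
  have hvr : v ∘ Sum.inr = y := rfl
  rw [hvl, hvr, hAtinv, hBy, ← Matrix.mulVec_mulVec y A S, hSy, ← Matrix.mulVec_add,
    Matrix.zero_mulVec, zero_add]
  have hxu : x + u = Bᵀ *ᵥ x' := by
    rw [hu_def, ← add_assoc, add_self_vec, zero_add]
  rw [hxu, Matrix.mulVec_mulVec, hABt, Matrix.one_mulVec]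
  funext i
  cases i with
  | inl i => rfl
  | inr i => rfl
end

section
/- Let m ≥ 1 and let H_m be the group of invertible 2m×2m matrices over 𝔽₂ of the form [[A, AS],[0, (Aᵀ)⁻¹]] with A ∈ GL(m,2) and S symmetric with zero diagonal. Then H_m acts transitively on the set 𝔽₂^{2m} \ Q_m = {(x,y) : xᵀy = 1}. -/
open Matrix

private lemma zmod2_add_self : ∀ x : ZMod 2, x + x = 0 := by decide

private lemma mat_add_self {m : ℕ} (X : Matrix (Fin m) (Fin m) (ZMod 2)) : X + X = 0 := by
  ext i k; exact zmod2_add_self _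

private lemma vec_add_self {m : ℕ} (x : Fin m → ZMod 2) : x + x = 0 := by
  funext i; exact zmod2_add_self _

/-- quadratic form of a symmetric zero-diagonal matrix vanishes over 𝔽₂ -/
private lemma quad_zero {m : ℕ} (S : Matrix (Fin m) (Fin m) (ZMod 2))
    (hS : S.IsSymm) (hd : ∀ i, S i i = 0) (a : Fin m → ZMod 2) :
    a ⬝ᵥ S.mulVec a = 0 := by
  have h1 : a ⬝ᵥ S.mulVec a = ∑ p : Fin m × Fin m, a p.1 * S p.1 p.2 * a p.2 := by
    rw [Fintype.sum_prod_type]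
    simp [dotProduct, mulVec, Finset.mul_sum, mul_assoc]
  rw [h1]
  refine Finset.sum_involution (fun p _ => (p.2, p.1)) ?_ ?_
    (fun _ _ => Finset.mem_univ _) (fun _ _ => rfl)
  · intro p _
    have hsym : S p.2 p.1 = S p.1 p.2 := by
      conv_lhs => rw [← hS]
      rw [transpose_apply]
    simp only [hsym]
    have : a p.2 * S p.1 p.2 * a p.1 = a p.1 * S p.1 p.2 * a p.2 := by ring
    rw [this]; exact zmod2_add_self _
  · intro p _ hf hEq
    apply hf
    have h2 : p.2 = p.1 := congrArg Prod.fst hEq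
    rw [h2, hd p.1, mul_zero, zero_mul]

private lemma entry_quad {m : ℕ} (A S : Matrix (Fin m) (Fin m) (ZMod 2)) (i : Fin m) :
    (A * S * Aᵀ) i i = (fun j => A i j) ⬝ᵥ S.mulVec (fun j => A i j) := by
  simp only [Matrix.mul_apply, Matrix.transpose_apply, dotProduct, mulVec,
    Finset.sum_mul, Finset.mul_sum]
  rw [Finset.sum_comm]
  refine Finset.sum_congr rfl fun k _ => Finset.sum_congr rfl fun j _ => by ring

private lemma diag_conj_zero {m : ℕ} {A S : Matrix (Fin m) (Fin m) (ZMod 2)}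
    (hS : S.IsSymm) (hd : ∀ i, S i i = 0) (i : Fin m) : (A * S * Aᵀ) i i = 0 := by
  rw [entry_quad]; exact quad_zero S hS hd _

private lemma InH.mulMem {m : ℕ} {M N : Matrix (Fin m ⊕ Fin m) (Fin m ⊕ Fin m) (ZMod 2)}
    (hM : InH m M) (hN : InH m N) : InH m (M * N) := by
  obtain ⟨A, S, hA, hS, hSd, rfl⟩ := hM
  obtain ⟨A', S', hA', hS', hSd', rfl⟩ := hN
  have hA'd : IsUnit A'.det := (Matrix.isUnit_iff_isUnit_det A').mp hA'
  refine ⟨A * A', S' + A'⁻¹ * S * A'⁻¹ᵀ, hA.mul hA', ?_, ?_, ?_⟩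
  · unfold Matrix.IsSymm
    rw [transpose_add, transpose_mul, transpose_mul, transpose_transpose, hS', hS.eq,
      ← Matrix.mul_assoc]
  · intro i
    simp only [Matrix.add_apply, hSd' i, zero_add]
    exact diag_conj_zero hS hSd i
  · rw [fromBlocks_multiply, Matrix.mul_zero, add_zero, Matrix.zero_mul, Matrix.mul_zero,
      add_zero, Matrix.zero_mul, zero_add]
    have hbr : (A * A')ᵀ⁻¹ = Aᵀ⁻¹ * A'ᵀ⁻¹ := by rw [transpose_mul, Matrix.mul_inv_rev]
    have htr : A * A' * (S' + A'⁻¹ * S * A'⁻¹ᵀ) = A * (A' * S') + A * S * A'ᵀ⁻¹ := by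
      rw [Matrix.mul_add]
      congr 1
      · rw [Matrix.mul_assoc]
      · simp only [Matrix.mul_assoc, Matrix.mul_nonsing_inv_cancel_left _ _ hA'd,
          Matrix.transpose_nonsing_inv]
    rw [hbr, htr]

private lemma InH.invMem {m : ℕ} {M : Matrix (Fin m ⊕ Fin m) (Fin m ⊕ Fin m) (ZMod 2)}
    (hM : InH m M) : ∃ N, InH m N ∧ N * M = 1 := by
  obtain ⟨A, S, hA, hS, hSd, rfl⟩ := hM
  have hAd : IsUnit A.det := (Matrix.isUnit_iff_isUnit_det A).mp hA
  have hAtd : IsUnit Aᵀ.det := by rwa [Matrix.det_transpose]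
  have hAinv : IsUnit A⁻¹ := by
    have : Invertible A⁻¹ := ⟨A, Matrix.mul_nonsing_inv _ hAd, Matrix.nonsing_inv_mul _ hAd⟩
    exact isUnit_of_invertible _
  refine ⟨fromBlocks A⁻¹ (A⁻¹ * (A * S * Aᵀ)) 0 (A⁻¹ᵀ⁻¹),
    ⟨A⁻¹, A * S * Aᵀ, hAinv, ?_, fun i => diag_conj_zero hS hSd i, rfl⟩, ?_⟩
  · unfold Matrix.IsSymm
    rw [transpose_mul, transpose_mul, transpose_transpose, hS.eq, ← Matrix.mul_assoc]
  · rw [fromBlocks_multiply]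
    rw [Matrix.mul_zero, add_zero, Matrix.zero_mul, Matrix.mul_zero, add_zero,
      Matrix.zero_mul, zero_add, Matrix.nonsing_inv_mul _ hAd,
      Matrix.transpose_nonsing_inv, Matrix.nonsing_inv_nonsing_inv _ hAtd,
      Matrix.mul_nonsing_inv _ hAtd]
    have htr : A⁻¹ * (A * S) + A⁻¹ * (A * S * Aᵀ) * Aᵀ⁻¹ = 0 := by
      simp only [Matrix.mul_assoc, Matrix.mul_nonsing_inv _ hAtd, Matrix.mul_one]
      exact mat_add_self _
    rw [htr, fromBlocks_one]

/-- every vector with x·y = 1 is in the H-orbit of (e₀,e₀) -/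
private lemma orbit {m : ℕ} (hm : 1 ≤ m) (v : Fin m ⊕ Fin m → ZMod 2)
    (hv : (fun i => v (Sum.inl i)) ⬝ᵥ (fun i => v (Sum.inr i)) = 1) :
    ∃ M, InH m M ∧
      M.mulVec (Sum.elim (Pi.single (⟨0, hm⟩ : Fin m) 1) (Pi.single (⟨0, hm⟩ : Fin m) 1)) = v := by
  set i₀ : Fin m := ⟨0, hm⟩ with hi₀
  set x : Fin m → ZMod 2 := fun i => v (Sum.inl i) with hx
  set y : Fin m → ZMod 2 := fun i => v (Sum.inr i) with hy
  set e₀ : Fin m → ZMod 2 := Pi.single i₀ 1 with he₀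
  -- find a coordinate where y is 1
  have hyj : ∃ j, y j = 1 := by
    by_contra h
    push_neg at h
    have h0 : ∀ j, y j = 0 := by
      intro j
      have := h j
      revert this; generalize y j = a; revert a; decide
    simp only [dotProduct, h0, mul_zero, Finset.sum_const_zero] at hv
    exact one_ne_zero hv.symm
  obtain ⟨j, hj⟩ := hyj
  set u : Fin m → ZMod 2 := y + Pi.single j 1 with hu
  set X : Matrix (Fin m) (Fin m) (ZMod 2) := vecMulVec u (Pi.single j 1) with hX
  set C : Matrix (Fin m) (Fin m) (ZMod 2) := 1 + X with hC
  have huj : u j = 0 := by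
    simp only [hu, Pi.add_apply, Pi.single_eq_same, hj]
    decide
  have hXX : X * X = 0 := by
    ext i k
    simp [hX, Matrix.mul_apply, vecMulVec_apply, Pi.single_apply, mul_ite, ite_mul,
      Finset.sum_ite_eq', huj]
  have hCC : C * C = 1 := by
    have hexp : C * C = 1 + (X + X) + X * X := by rw [hC]; noncomm_ring
    rw [hexp, mat_add_self, add_zero, hXX, add_zero]
  set σ : Equiv.Perm (Fin m) := Equiv.swap i₀ j with hσ
  set B : Matrix (Fin m) (Fin m) (ZMod 2) := C.submatrix id ⇑σ with hB
  set B' : Matrix (Fin m) (Fin m) (ZMod 2) := C.submatrix ⇑σ id with hB'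
  have hBB' : B * B' = 1 := by
    rw [hB, hB', Matrix.submatrix_mul_equiv, hCC, Matrix.submatrix_id_id]
  have hB'B : B' * B = 1 := by
    have h1 : B' * B = (C * C).submatrix ⇑σ ⇑σ :=
      Matrix.submatrix_mul_equiv C C ⇑σ (Equiv.refl _) ⇑σ
    rw [h1, hCC, Matrix.submatrix_one_equiv]
  have hBy : B *ᵥ e₀ = y := by
    funext i
    have hcol : (B *ᵥ e₀) i = C i j := by
      simp only [hB, mulVec, dotProduct, Matrix.submatrix_apply, id_eq, he₀, Pi.single_apply,
        mul_ite, mul_one, mul_zero, Finset.sum_ite_eq', Finset.mem_univ, if_pos, hσ,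
        Equiv.swap_apply_left]
    rw [hcol, hC, hX]
    simp only [Matrix.add_apply, Matrix.one_apply, vecMulVec_apply, hu, Pi.add_apply,
      Pi.single_apply]
    by_cases hij : i = j
    · subst hij
      simp only [if_pos rfl, Pi.single_eq_same, mul_one]
      generalize y i = a; revert a; decide
    · simp [hij]
  set A : Matrix (Fin m) (Fin m) (ZMod 2) := B'ᵀ with hA
  have hABt : A * Bᵀ = 1 := by rw [hA, ← transpose_mul, hBB', transpose_one]
  have hBtA : Bᵀ * A = 1 := by rw [hA, ← transpose_mul, hB'B, transpose_one]
  have hAunit : IsUnit A := by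
    have : Invertible A := ⟨Bᵀ, hBtA, hABt⟩
    exact isUnit_of_invertible _
  have hAt : Aᵀ⁻¹ = B := by
    rw [hA, transpose_transpose]
    exact Matrix.inv_eq_right_inv hB'B
  set c : Fin m → ZMod 2 := Bᵀ *ᵥ x + e₀ with hc
  have hci₀ : c i₀ = 0 := by
    have h1 : (Bᵀ *ᵥ x) i₀ = x ⬝ᵥ y := by
      rw [← hBy]
      simp [mulVec, dotProduct, transpose_apply, he₀, Pi.single_apply,
        Finset.sum_ite_eq', mul_comm]
    simp only [hc, Pi.add_apply, h1, hv, he₀, Pi.single_eq_same]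
    decide
  set S : Matrix (Fin m) (Fin m) (ZMod 2) := vecMulVec c e₀ + vecMulVec e₀ c with hS
  have hSsym : S.IsSymm := by
    unfold Matrix.IsSymm
    ext i k
    simp only [hS, transpose_apply, Matrix.add_apply, vecMulVec_apply]
    ring
  have hSd : ∀ i, S i i = 0 := by
    intro i
    simp only [hS, Matrix.add_apply, vecMulVec_apply]
    rw [mul_comm (e₀ i) (c i)]
    exact zmod2_add_self _
  have hSe : S *ᵥ e₀ = c := by
    funext i
    simp [hS, mulVec, dotProduct, Matrix.add_apply, vecMulVec_apply, he₀, Pi.single_apply,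
      Finset.sum_ite_eq', hci₀, Finset.mul_sum, mul_ite, ite_mul]
  refine ⟨fromBlocks A (A * S) 0 Aᵀ⁻¹, ⟨A, S, hAunit, hSsym, hSd, rfl⟩, ?_⟩
  rw [hAt, fromBlocks_mulVec]
  have hc1 : ((Sum.elim e₀ e₀ : Fin m ⊕ Fin m → ZMod 2) ∘ Sum.inl) = e₀ := rfl
  have hc2 : ((Sum.elim e₀ e₀ : Fin m ⊕ Fin m → ZMod 2) ∘ Sum.inr) = e₀ := rfl
  have hleft : A *ᵥ e₀ + (A * S) *ᵥ e₀ = x := by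
    rw [← Matrix.mulVec_mulVec, ← Matrix.mulVec_add]
    have h2 : e₀ + S *ᵥ e₀ = Bᵀ *ᵥ x := by
      rw [hSe, hc, add_comm (Bᵀ *ᵥ x) e₀, ← add_assoc, vec_add_self, zero_add]
    rw [h2, Matrix.mulVec_mulVec, hABt, Matrix.one_mulVec]
  rw [hc1, hc2, Matrix.zero_mulVec, zero_add, hBy, hleft]
  funext s
  cases s with
  | inl i => rfl
  | inr i => rfl

theorem stmt6 (m : ℕ) (hm : 1 ≤ m) (v w : Fin m ⊕ Fin m → ZMod 2)
    (hv : (fun i => v (Sum.inl i)) ⬝ᵥ (fun i => v (Sum.inr i)) = 1)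
    (hw : (fun i => w (Sum.inl i)) ⬝ᵥ (fun i => w (Sum.inr i)) = 1) :
    ∃ M, InH m M ∧ M.mulVec v = w := by
  obtain ⟨Mv, hMv, hMve⟩ := orbit hm v hv
  obtain ⟨Mw, hMw, hMwe⟩ := orbit hm w hw
  obtain ⟨N, hN, hNMv⟩ := hMv.invMem
  refine ⟨Mw * N, hMw.mulMem hN, ?_⟩
  have h1 : N.mulVec v =
      Sum.elim (Pi.single (⟨0, hm⟩ : Fin m) 1) (Pi.single (⟨0, hm⟩ : Fin m) 1) := by
    rw [← hMve, Matrix.mulVec_mulVec, hNMv, Matrix.one_mulVec]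
  rw [← Matrix.mulVec_mulVec, h1, hMwe]
end

section
/- Let m ≥ 1 and let H_m ≤ GL(2m,2) be the group of matrices [[A, AS],[0, (Aᵀ)⁻¹]] with A invertible and S symmetric with zero diagonal. Then the orbits of H_m on 𝔽₂^{2m} are exactly: {0}, S_m \ {0}, Q_m \ S_m, and 𝔽₂^{2m} \ Q_m. -/
open Matrix

/-- Two vectors of `𝔽₂^{2m}` lie in the same of the four classes
`{0}`, `S_m \ {0}`, `Q_m \ S_m`, `𝔽₂^{2m} \ Q_m`. -/
def SameClass (m : ℕ) (v w : Fin m ⊕ Fin m → ZMod 2) : Prop :=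
  (v = 0 ∧ w = 0) ∨
  (((∀ i, v (Sum.inr i) = 0) ∧ v ≠ 0) ∧ ((∀ i, w (Sum.inr i) = 0) ∧ w ≠ 0)) ∨
  (((fun i => v (Sum.inl i)) ⬝ᵥ (fun i => v (Sum.inr i)) = 0 ∧
      ¬(∀ i, v (Sum.inr i) = 0)) ∧
   ((fun i => w (Sum.inl i)) ⬝ᵥ (fun i => w (Sum.inr i)) = 0 ∧
      ¬(∀ i, w (Sum.inr i) = 0))) ∨
  ((fun i => v (Sum.inl i)) ⬝ᵥ (fun i => v (Sum.inr i)) ≠ 0 ∧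
   (fun i => w (Sum.inl i)) ⬝ᵥ (fun i => w (Sum.inr i)) ≠ 0)

namespace Stmt7Aux

variable {m : ℕ}

/-- The orbit relation. -/
def Rel (m : ℕ) (v w : Fin m ⊕ Fin m → ZMod 2) : Prop :=
  ∃ M, InH m M ∧ M.mulVec v = w

lemma add_self_vec {α : Type*} (f : α → ZMod 2) : f + f = 0 := by
  funext i
  exact CharTwo.add_self_eq_zero _

lemma add_self_mat {α β : Type*} (S : Matrix α β (ZMod 2)) : S + S = 0 := by
  ext i j
  exact CharTwo.add_self_eq_zero _

lemma quad (S : Matrix (Fin m) (Fin m) (ZMod 2)) (hS : S.IsSymm) (hd : ∀ i, S i i = 0)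
    (y : Fin m → ZMod 2) : y ⬝ᵥ S.mulVec y = 0 := by
  have hsum : y ⬝ᵥ S.mulVec y
      = ∑ p ∈ Finset.univ ×ˢ Finset.univ, y p.1 * S p.1 p.2 * y p.2 := by
    rw [Finset.sum_product]
    simp only [dotProduct, Matrix.mulVec, Finset.mul_sum]
    exact Finset.sum_congr rfl fun i _ => Finset.sum_congr rfl fun j _ => by ring
  rw [hsum]
  refine Finset.sum_involution (fun p _ => (p.2, p.1)) ?_ ?_ (fun p hp => by simp) (fun p hp => rfl)
  · intro p _
    have h1 : S p.2 p.1 = S p.1 p.2 := hS.apply p.1 p.2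
    have h2 : y p.2 * S p.2 p.1 * y p.1 = y p.1 * S p.1 p.2 * y p.2 := by rw [h1]; ring
    rw [h2]
    exact CharTwo.add_self_eq_zero _
  · intro p _ hne h
    apply hne
    have hp : p.1 = p.2 := by
      have := congrArg Prod.fst h
      simpa using this.symm
    rw [hp, hd]
    ring

lemma conj_symm (B S : Matrix (Fin m) (Fin m) (ZMod 2)) (hS : S.IsSymm) :
    (B * S * Bᵀ).IsSymm := by
  show _ᵀ = _
  rw [Matrix.transpose_mul, Matrix.transpose_mul, Matrix.transpose_transpose, hS.eq, mul_assoc]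

lemma conj_diag (B S : Matrix (Fin m) (Fin m) (ZMod 2)) (hS : S.IsSymm)
    (hd : ∀ i, S i i = 0) (i : Fin m) : (B * S * Bᵀ) i i = 0 := by
  have h : (B * S * Bᵀ) i i = (fun j => B i j) ⬝ᵥ S.mulVec (fun j => B i j) := by
    simp only [Matrix.mul_apply, Matrix.transpose_apply, dotProduct, Matrix.mulVec,
      Finset.sum_mul, Finset.mul_sum]
    rw [Finset.sum_comm]
    exact Finset.sum_congr rfl fun j _ => Finset.sum_congr rfl fun k _ => by ring
  rw [h]
  exact quad S hS hd _

lemma isUnit_inv {A : Matrix (Fin m) (Fin m) (ZMod 2)} (hA : IsUnit A) : IsUnit A⁻¹ :=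
  Matrix.isUnit_nonsing_inv_iff.mpr hA

lemma isUnit_transpose {A : Matrix (Fin m) (Fin m) (ZMod 2)} (hA : IsUnit A) : IsUnit Aᵀ := by
  rw [Matrix.isUnit_iff_isUnit_det, Matrix.det_transpose]
  exact (Matrix.isUnit_iff_isUnit_det A).mp hA

lemma mulVec_inj {A : Matrix (Fin m) (Fin m) (ZMod 2)} (hA : IsUnit A)
    {z : Fin m → ZMod 2} (h : A.mulVec z = 0) : z = 0 := by
  have hdet := (Matrix.isUnit_iff_isUnit_det A).mp hA
  calc z = (A⁻¹ * A).mulVec z := by rw [Matrix.nonsing_inv_mul _ hdet, Matrix.one_mulVec]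
  _ = A⁻¹.mulVec (A.mulVec z) := (Matrix.mulVec_mulVec _ _ _).symm
  _ = 0 := by rw [h, Matrix.mulVec_zero]

lemma Rel.refl (v : Fin m ⊕ Fin m → ZMod 2) : Rel m v v := by
  refine ⟨1, ⟨1, 0, isUnit_one, by simp [Matrix.IsSymm], by simp, ?_⟩, Matrix.one_mulVec v⟩
  simp [Matrix.fromBlocks_one]

lemma inH_mul {M N : Matrix (Fin m ⊕ Fin m) (Fin m ⊕ Fin m) (ZMod 2)}
    (hM : InH m M) (hN : InH m N) : InH m (M * N) := by
  obtain ⟨A, S, hA, hS, hd, rfl⟩ := hM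
  obtain ⟨B, T, hB, hT, hTd, rfl⟩ := hN
  have hBdet := (Matrix.isUnit_iff_isUnit_det B).mp hB
  have eTR : A * (B * T) + A * S * Bᵀ⁻¹ = A * B * (T + B⁻¹ * S * B⁻¹ᵀ) := by
    rw [mul_add]
    congr 1
    · rw [mul_assoc]
    · rw [Matrix.transpose_nonsing_inv]
      simp only [← mul_assoc]
      rw [mul_assoc A B B⁻¹, Matrix.mul_nonsing_inv _ hBdet, mul_one]
  have eBR : Aᵀ⁻¹ * Bᵀ⁻¹ = ((A * B)ᵀ)⁻¹ := by
    rw [Matrix.transpose_mul, Matrix.mul_inv_rev]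
  refine ⟨A * B, T + B⁻¹ * S * B⁻¹ᵀ, hA.mul hB,
    hT.add (conj_symm _ _ hS), fun i => by
      simp [Matrix.add_apply, hTd i, conj_diag _ _ hS hd i], ?_⟩
  rw [Matrix.fromBlocks_multiply]
  simp only [Matrix.mul_zero, Matrix.zero_mul, add_zero, zero_add, Matrix.mul_one]
  rw [eTR, eBR]

lemma inH_left_inv {M : Matrix (Fin m ⊕ Fin m) (Fin m ⊕ Fin m) (ZMod 2)}
    (hM : InH m M) : ∃ N, InH m N ∧ N * M = 1 := by
  obtain ⟨A, S, hA, hS, hd, rfl⟩ := hM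
  have hdet := (Matrix.isUnit_iff_isUnit_det A).mp hA
  have hdetT : IsUnit Aᵀ.det := by rw [Matrix.det_transpose]; exact hdet
  refine ⟨Matrix.fromBlocks A⁻¹ (A⁻¹ * (A * S * Aᵀ)) 0 A⁻¹ᵀ⁻¹,
    ⟨A⁻¹, A * S * Aᵀ, isUnit_inv hA, conj_symm _ _ hS, conj_diag _ _ hS hd, rfl⟩, ?_⟩
  rw [Matrix.fromBlocks_multiply]
  have h1 : A⁻¹ * A = 1 := Matrix.nonsing_inv_mul _ hdet
  have h2 : Aᵀ * Aᵀ⁻¹ = 1 := Matrix.mul_nonsing_inv _ hdetT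
  have h3 : A⁻¹ᵀ⁻¹ * Aᵀ⁻¹ = 1 := by
    rw [Matrix.transpose_nonsing_inv, Matrix.nonsing_inv_nonsing_inv _ hdetT]
    exact h2
  have h4 : A⁻¹ * (A * S) + A⁻¹ * (A * S * Aᵀ) * Aᵀ⁻¹ = 0 := by
    simp only [← mul_assoc]
    rw [h1]
    simp only [one_mul]
    rw [mul_assoc, h2, mul_one]
    exact add_self_mat S
  rw [h1, h4, h3]
  simp [Matrix.fromBlocks_one]

lemma Rel.trans {v w u : Fin m ⊕ Fin m → ZMod 2} (h1 : Rel m v w) (h2 : Rel m w u) :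
    Rel m v u := by
  obtain ⟨M, hM, rfl⟩ := h1
  obtain ⟨N, hN, rfl⟩ := h2
  exact ⟨N * M, inH_mul hN hM, (Matrix.mulVec_mulVec _ _ _).symm⟩

lemma Rel.symm {v w : Fin m ⊕ Fin m → ZMod 2} (h : Rel m v w) : Rel m w v := by
  obtain ⟨M, hM, rfl⟩ := h
  obtain ⟨N, hN, hNM⟩ := inH_left_inv hM
  exact ⟨N, hN, by rw [Matrix.mulVec_mulVec, hNM, Matrix.one_mulVec]⟩

set_option maxHeartbeats 1000000 in
/-- There is an invertible matrix sending the standard basis vector `i0` to any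
nonzero vector `y`. -/
lemma exists_unit_col (i0 : Fin m) {y : Fin m → ZMod 2} (hy : y ≠ 0) :
    ∃ A : Matrix (Fin m) (Fin m) (ZMod 2), IsUnit A ∧ A.mulVec (Pi.single i0 1) = y := by
  have hli : LinearIndepOn (ZMod 2) id ({y} : Set (Fin m → ZMod 2)) :=
    LinearIndepOn.singleton hy
  let b0 := Module.Basis.extend hli
  haveI : Fintype ↥(hli.extend (Set.subset_univ {y})) :=
    FiniteDimensional.fintypeBasisIndex b0
  have hcard : Fintype.card ↥(hli.extend (Set.subset_univ {y})) = m := by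
    rw [← Module.finrank_eq_card_basis b0, Module.finrank_fintype_fun_eq_card, Fintype.card_fin]
  have hymem : y ∈ hli.extend (Set.subset_univ {y}) := hli.subset_extend _ rfl
  let e0 : ↥(hli.extend (Set.subset_univ {y})) ≃ Fin m := Fintype.equivFinOfCardEq hcard
  let e := e0.trans (Equiv.swap (e0 ⟨y, hymem⟩) i0)
  let b := b0.reindex e
  have hb : b i0 = y := by
    have he : e.symm i0 = ⟨y, hymem⟩ := by
      simp [e, Equiv.symm_trans_apply, Equiv.symm_swap, Equiv.swap_apply_right]
    show b0.reindex e i0 = y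
    rw [Module.Basis.reindex_apply, he]
    exact Module.Basis.extend_apply_self hli ⟨y, hymem⟩
  haveI := Module.Basis.invertibleToMatrix (Pi.basisFun (ZMod 2) (Fin m)) b
  refine ⟨(Pi.basisFun (ZMod 2) (Fin m)).toMatrix ⇑b, isUnit_of_invertible _, ?_⟩
  rw [Matrix.mulVec_single]
  funext j
  simp [Module.Basis.toMatrix_apply, Pi.basisFun_repr, hb]

lemma exists_unit_to_single (i0 : Fin m) {x : Fin m → ZMod 2} (hx : x ≠ 0) :
    ∃ A : Matrix (Fin m) (Fin m) (ZMod 2), IsUnit A ∧ A.mulVec x = Pi.single i0 1 := by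
  obtain ⟨B, hB, hBx⟩ := exists_unit_col i0 hx
  refine ⟨B⁻¹, isUnit_inv hB, ?_⟩
  rw [← hBx, Matrix.mulVec_mulVec,
    Matrix.nonsing_inv_mul _ ((Matrix.isUnit_iff_isUnit_det B).mp hB), Matrix.one_mulVec]

/-- The basic invariant: the pairing `x ⬝ᵥ y` is preserved. -/
lemma dot_inv (A S : Matrix (Fin m) (Fin m) (ZMod 2)) (hA : IsUnit A) (hS : S.IsSymm)
    (hd : ∀ i, S i i = 0) (x y : Fin m → ZMod 2) :
    (A.mulVec x + (A * S).mulVec y) ⬝ᵥ (Aᵀ⁻¹.mulVec y) = x ⬝ᵥ y := by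
  have hdetT : IsUnit Aᵀ.det := by
    rw [Matrix.det_transpose]; exact (Matrix.isUnit_iff_isUnit_det A).mp hA
  have h1 : A.mulVec x + (A * S).mulVec y = A.mulVec (x + S.mulVec y) := by
    rw [Matrix.mulVec_add, Matrix.mulVec_mulVec]
  have h2 : ∀ u w : Fin m → ZMod 2, (A.mulVec u) ⬝ᵥ w = u ⬝ᵥ (Aᵀ.mulVec w) := by
    intro u w
    rw [dotProduct_comm, Matrix.dotProduct_mulVec, dotProduct_comm,
      Matrix.mulVec_transpose]
  rw [h1, h2, Matrix.mulVec_mulVec, Matrix.mul_nonsing_inv _ hdetT, Matrix.one_mulVec,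
    add_dotProduct, dotProduct_comm (S.mulVec y) y, quad S hS hd y, add_zero]

/-- Build the `H`-matrix out of its data; record the action on a vector. -/
lemma rel_of_data (A S : Matrix (Fin m) (Fin m) (ZMod 2)) (hA : IsUnit A) (hS : S.IsSymm)
    (hd : ∀ i, S i i = 0) (v : Fin m ⊕ Fin m → ZMod 2) (a b : Fin m → ZMod 2)
    (ha : A.mulVec (fun i => v (Sum.inl i)) + (A * S).mulVec (fun i => v (Sum.inr i)) = a)
    (hb : Aᵀ⁻¹.mulVec (fun i => v (Sum.inr i)) = b) :
    Rel m v (Sum.elim a b) := by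
  refine ⟨Matrix.fromBlocks A (A * S) 0 Aᵀ⁻¹, ⟨A, S, hA, hS, hd, rfl⟩, ?_⟩
  rw [Matrix.fromBlocks_mulVec]
  funext i
  cases i <;> simp [Matrix.zero_mulVec, Function.comp_def, ← ha, ← hb]

lemma red2 (i0 : Fin m) {v : Fin m ⊕ Fin m → ZMod 2} (h0 : ∀ i, v (Sum.inr i) = 0)
    (hv : v ≠ 0) : Rel m v (Sum.elim (Pi.single i0 1) 0) := by
  set x : Fin m → ZMod 2 := fun i => v (Sum.inl i) with hxdef
  have hx : x ≠ 0 := by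
    intro h
    apply hv
    funext i
    cases i with
    | inl i => exact congrFun h i
    | inr i => exact h0 i
  obtain ⟨A, hA, hAx⟩ := exists_unit_to_single i0 hx
  have hy : (fun i => v (Sum.inr i)) = (0 : Fin m → ZMod 2) := funext h0
  exact rel_of_data A 0 hA (by simp [Matrix.IsSymm]) (by simp) v _ _
    (by rw [hy, Matrix.mulVec_zero, add_zero, ← hxdef, hAx])
    (by rw [hy, Matrix.mulVec_zero])

/-- Special symmetric matrix with zero diagonal mapping `e_{i0}` to a vector `c`
with `c i0 = 0`. -/
lemma special_S (i0 : Fin m) (c : Fin m → ZMod 2) (hc : c i0 = 0) :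
    ∃ S : Matrix (Fin m) (Fin m) (ZMod 2), S.IsSymm ∧ (∀ i, S i i = 0) ∧
      S.mulVec (Pi.single i0 1) = c := by
  refine ⟨Matrix.of fun j k => c j * (Pi.single i0 1 : Fin m → ZMod 2) k
      + (Pi.single i0 1 : Fin m → ZMod 2) j * c k, ?_, ?_, ?_⟩
  · apply Matrix.IsSymm.ext
    intro j k
    show c k * _ + _ * c j = c j * _ + _ * c k
    ring
  · intro i
    show c i * (Pi.single i0 1 : Fin m → ZMod 2) i
        + (Pi.single i0 1 : Fin m → ZMod 2) i * c i = 0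
    rw [mul_comm ((Pi.single i0 1 : Fin m → ZMod 2) i) (c i)]
    exact CharTwo.add_self_eq_zero _
  · rw [Matrix.mulVec_single]
    funext j
    show (c j * (Pi.single i0 1 : Fin m → ZMod 2) i0
        + (Pi.single i0 1 : Fin m → ZMod 2) j * c i0) * 1 = c j
    rcases eq_or_ne j i0 with rfl | hj
    · simp [hc]
    · simp [Pi.single_apply, hj]

lemma red34 (i0 : Fin m) {v : Fin m ⊕ Fin m → ZMod 2}
    (hy : (fun i => v (Sum.inr i)) ≠ (0 : Fin m → ZMod 2)) :
    Rel m v (Sum.elim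
      (if (fun i => v (Sum.inl i)) ⬝ᵥ (fun i => v (Sum.inr i)) = 0 then 0 else Pi.single i0 1)
      (Pi.single i0 1)) := by
  set x : Fin m → ZMod 2 := fun i => v (Sum.inl i) with hxdef
  set y : Fin m → ZMod 2 := fun i => v (Sum.inr i) with hydef
  obtain ⟨B, hB, hBy⟩ := exists_unit_col i0 hy
  have hBdet := (Matrix.isUnit_iff_isUnit_det B).mp hB
  have hBT : IsUnit Bᵀ := isUnit_transpose hB
  have hBTinv : Bᵀᵀ⁻¹ = B⁻¹ := by rw [Matrix.transpose_transpose]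
  have hB'y : B⁻¹.mulVec y = Pi.single i0 1 := by
    rw [← hBy, Matrix.mulVec_mulVec, Matrix.nonsing_inv_mul _ hBdet, Matrix.one_mulVec]
  set x' : Fin m → ZMod 2 := Bᵀ.mulVec x with hx'def
  have step1 : Rel m v (Sum.elim x' (Pi.single i0 1)) :=
    rel_of_data Bᵀ 0 hBT (by simp [Matrix.IsSymm]) (by simp) v _ _
      (by rw [Matrix.mul_zero, Matrix.zero_mulVec, add_zero, ← hxdef, ← hx'def])
      (by rw [hBTinv, ← hydef, hB'y])
  have hinv : x' ⬝ᵥ (Pi.single i0 1) = x ⬝ᵥ y := by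
    have h := dot_inv Bᵀ 0 hBT (by simp [Matrix.IsSymm]) (by simp) x y
    simpa [hBTinv, hB'y, Matrix.mulVec_zero, ← hx'def] using h
  have hx'i0 : x' i0 = x ⬝ᵥ y := by
    rw [← hinv, dotProduct_single, mul_one]
  have hone : ((1 : Matrix (Fin m) (Fin m) (ZMod 2))ᵀ)⁻¹ = 1 := by
    rw [Matrix.transpose_one, inv_one]
  rcases eq_or_ne (x ⬝ᵥ y) 0 with h0 | h0
  · obtain ⟨S, hS, hd, hSe⟩ := special_S i0 x' (by rw [hx'i0, h0])
    have step2 : Rel m (Sum.elim x' (Pi.single i0 1)) (Sum.elim 0 (Pi.single i0 1)) :=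
      rel_of_data 1 S isUnit_one hS hd (Sum.elim x' (Pi.single i0 1)) _ _
        (by
          show (1 : Matrix (Fin m) (Fin m) (ZMod 2)).mulVec x'
              + ((1 : Matrix (Fin m) (Fin m) (ZMod 2)) * S).mulVec (Pi.single i0 1) = 0
          rw [Matrix.one_mulVec, one_mul, hSe, add_self_vec])
        (by
          show ((1 : Matrix (Fin m) (Fin m) (ZMod 2))ᵀ)⁻¹.mulVec (Pi.single i0 1)
              = Pi.single i0 1
          rw [hone, Matrix.one_mulVec])
    rw [if_pos h0]
    exact step1.trans step2
  · have h1 : x ⬝ᵥ y = 1 := by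
      have h2 : ∀ a : ZMod 2, a ≠ 0 → a = 1 := by decide
      exact h2 _ h0
    obtain ⟨S, hS, hd, hSe⟩ := special_S i0 (x' + Pi.single i0 1)
      (by simp [hx'i0, h1, CharTwo.add_self_eq_zero])
    have hadd : x' + (x' + Pi.single i0 1) = (Pi.single i0 1 : Fin m → ZMod 2) := by
      rw [← add_assoc, add_self_vec x', zero_add]
    have step2 : Rel m (Sum.elim x' (Pi.single i0 1))
        (Sum.elim (Pi.single i0 1) (Pi.single i0 1)) :=
      rel_of_data 1 S isUnit_one hS hd (Sum.elim x' (Pi.single i0 1)) _ _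
        (by
          show (1 : Matrix (Fin m) (Fin m) (ZMod 2)).mulVec x'
              + ((1 : Matrix (Fin m) (Fin m) (ZMod 2)) * S).mulVec (Pi.single i0 1)
              = Pi.single i0 1
          rw [Matrix.one_mulVec, one_mul, hSe, hadd])
        (by
          show ((1 : Matrix (Fin m) (Fin m) (ZMod 2))ᵀ)⁻¹.mulVec (Pi.single i0 1)
              = Pi.single i0 1
          rw [hone, Matrix.one_mulVec])
    rw [if_neg h0]
    exact step1.trans step2

end Stmt7Aux

open Stmt7Aux in
theorem stmt7 (m : ℕ) (hm : 1 ≤ m) (v w : Fin m ⊕ Fin m → ZMod 2) :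
    (∃ M, InH m M ∧ M.mulVec v = w) ↔ SameClass m v w := by
  have i0 : Fin m := ⟨0, hm⟩
  constructor
  · rintro ⟨M, ⟨A, S, hA, hS, hd, rfl⟩, hvw⟩
    set x : Fin m → ZMod 2 := fun i => v (Sum.inl i) with hxdef
    set y : Fin m → ZMod 2 := fun i => v (Sum.inr i) with hydef
    have hform : w = Sum.elim (A.mulVec x + (A * S).mulVec y) (Aᵀ⁻¹.mulVec y) := by
      rw [← hvw, Matrix.fromBlocks_mulVec]
      funext i
      cases i <;> simp [Matrix.zero_mulVec, Function.comp_def, ← hxdef, ← hydef]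
    have hwl : (fun i => w (Sum.inl i)) = A.mulVec x + (A * S).mulVec y := by
      funext i; rw [hform]; rfl
    have hwr : (fun i => w (Sum.inr i)) = Aᵀ⁻¹.mulVec y := by
      funext i; rw [hform]; rfl
    have hdetT : IsUnit Aᵀ.det := by
      rw [Matrix.det_transpose]; exact (Matrix.isUnit_iff_isUnit_det A).mp hA
    by_cases hy : y = 0
    · by_cases hx : x = 0
      · left
        have hv0 : v = 0 := by
          funext i
          cases i with
          | inl i => exact congrFun hx i
          | inr i => exact congrFun hy i
        refine ⟨hv0, ?_⟩
        rw [hform, hx, hy]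
        simp [Matrix.mulVec_zero]
      · right; left
        refine ⟨⟨fun i => congrFun hy i, fun h => hx (by funext i; exact congrFun h (Sum.inl i))⟩,
          ⟨fun i => ?_, fun h => ?_⟩⟩
        · rw [hform]; simp [hy, Matrix.mulVec_zero]
        · apply hx
          apply mulVec_inj hA
          have h2 : (fun i => w (Sum.inl i)) = (0 : Fin m → ZMod 2) := by
            funext i; exact congrFun h (Sum.inl i)
          rw [hwl, hy, Matrix.mulVec_zero, add_zero] at h2
          exact h2
    · have hwy : Aᵀ⁻¹.mulVec y ≠ 0 := by
        intro h
        apply hy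
        have h2 : (Aᵀ * Aᵀ⁻¹).mulVec y = 0 := by
          rw [← Matrix.mulVec_mulVec, h, Matrix.mulVec_zero]
        rwa [Matrix.mul_nonsing_inv _ hdetT, Matrix.one_mulVec] at h2
      have hwy' : ¬ ∀ i, w (Sum.inr i) = 0 := by
        intro h
        exact hwy (by rw [← hwr]; funext i; exact h i)
      have hdot : (fun i => w (Sum.inl i)) ⬝ᵥ (fun i => w (Sum.inr i)) = x ⬝ᵥ y := by
        rw [hwl, hwr]
        exact dot_inv A S hA hS hd x y
      by_cases h0 : x ⬝ᵥ y = 0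
      · right; right; left
        exact ⟨⟨h0, fun h => hy (funext h)⟩, ⟨by rw [hdot]; exact h0, hwy'⟩⟩
      · right; right; right
        exact ⟨h0, by rw [hdot]; exact h0⟩
  · intro hsc
    rcases hsc with ⟨hv, hw⟩ | ⟨hv, hw⟩ | ⟨hv, hw⟩ | ⟨hv, hw⟩
    · subst hv; subst hw; exact Rel.refl 0
    · exact (red2 i0 hv.1 hv.2).trans (Rel.symm (red2 i0 hw.1 hw.2))
    · have h1 := red34 i0 (fun h => hv.2 (fun i => congrFun h i))
      have h2 := red34 i0 (fun h => hw.2 (fun i => congrFun h i))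
      rw [if_pos hv.1] at h1
      rw [if_pos hw.1] at h2
      exact h1.trans (Rel.symm h2)
    · have hvy : (fun i => v (Sum.inr i)) ≠ (0 : Fin m → ZMod 2) := by
        intro h
        apply hv
        rw [show (fun i => v (Sum.inr i)) = (0 : Fin m → ZMod 2) from h, dotProduct_zero]
      have hwy : (fun i => w (Sum.inr i)) ≠ (0 : Fin m → ZMod 2) := by
        intro h
        apply hw
        rw [show (fun i => w (Sum.inr i)) = (0 : Fin m → ZMod 2) from h, dotProduct_zero]
      have h1 := red34 i0 hvy
      have h2 := red34 i0 hwy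
      rw [if_neg hv] at h1
      rw [if_neg hw] at h2
      exact h1.trans (Rel.symm h2)
end

section
/- Let m ≥ 2 and let Γ^{(m)} be the graph on 𝔽₂^m × 𝔽₂^m with (v₁,v₂) ~ (w₁,w₂) iff (v₁+w₁)ᵀ(v₂+w₂) = 0 and v₂ ≠ w₂. Then Γ^{(m)} is strongly regular: any two adjacent vertices have exactly 2^{2m-2} − 2^{m-1} common neighbors, and any two distinct non-adjacent vertices also have exactly 2^{2m-2} − 2^{m-1} common neighbors. -/
open Matrix Finset

/-- Adjacency in the Brouwer–Ivanov–Klin graph `Γ^{(m)}`. -/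
def Adj (m : ℕ) (v w : (Fin m → ZMod 2) × (Fin m → ZMod 2)) : Prop :=
  (v.1 + w.1) ⬝ᵥ (v.2 + w.2) = 0 ∧ v.2 ≠ w.2

instance (m : ℕ) (v w : (Fin m → ZMod 2) × (Fin m → ZMod 2)) : Decidable (Adj m v w) := by
  unfold Adj; infer_instance

namespace BIK

abbrev V (m : ℕ) := Fin m → ZMod 2

lemma z2 : ∀ a : ZMod 2, a = 0 ∨ a = 1 := by decide

lemma z2add : ∀ a b : ZMod 2, a + b = 0 ↔ a = b := by decide

variable {m : ℕ}

lemma vadd_self (a : V m) : a + a = 0 := funext fun i => (z2add (a i) (a i)).2 rfl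

lemma vadd_eq_zero {a b : V m} : a + b = 0 ↔ a = b := by
  constructor
  · intro h; funext i; exact (z2add (a i) (b i)).1 (congrFun h i)
  · rintro rfl; exact vadd_self a

lemma card_fiber_mul {M N : Type*} [AddCommGroup M] [AddCommGroup N] [Fintype M] [Fintype N]
    [DecidableEq N] (f : M →+ N) (hf : Function.Surjective f) (c : N) :
    Fintype.card {x // f x = c} * Fintype.card N = Fintype.card M := by
  classical
  have key : ∀ d : N, Fintype.card {x // f x = d} = Fintype.card {x // f x = c} := by
    intro d
    obtain ⟨xc, hxc⟩ := hf c
    obtain ⟨xd, hxd⟩ := hf d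
    refine Fintype.card_congr ⟨fun p => ⟨p.1 + (xc - xd), ?_⟩, fun p => ⟨p.1 + (xd - xc), ?_⟩, ?_, ?_⟩
    · simp [map_add, map_sub, p.2, hxd, hxc]
    · simp [map_add, map_sub, p.2, hxd, hxc]
    · intro p
      exact Subtype.ext (by dsimp only; rw [add_assoc, sub_add_sub_cancel, sub_self, add_zero])
    · intro p
      exact Subtype.ext (by dsimp only; rw [add_assoc, sub_add_sub_cancel, sub_self, add_zero])
  have h1 : Fintype.card M = ∑ d : N, Fintype.card {x // f x = d} :=
    (Fintype.card_congr (Equiv.sigmaFiberEquiv f)).symm.trans Fintype.card_sigma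
  rw [h1]
  simp [key, Finset.sum_const, mul_comm]


def dp (u : V m) : V m →+ ZMod 2 where
  toFun x := x ⬝ᵥ u
  map_zero' := zero_dotProduct u
  map_add' x y := add_dotProduct x y u

def dp2 (u₁ u₂ : V m) : V m →+ ZMod 2 × ZMod 2 where
  toFun x := (x ⬝ᵥ u₁, x ⬝ᵥ u₂)
  map_zero' := by simp [Prod.ext_iff]
  map_add' x y := by simp [add_dotProduct, Prod.ext_iff]

lemma exists_one {u : V m} (hu : u ≠ 0) : ∃ i, u i = 1 := by
  by_contra hc
  push_neg at hc
  exact hu (funext fun i => (z2 (u i)).resolve_right (hc i))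

lemma dp_surj {u : V m} (hu : u ≠ 0) : Function.Surjective (dp u) := by
  obtain ⟨i, hi⟩ := exists_one hu
  intro t
  rcases z2 t with rfl | rfl
  · exact ⟨0, map_zero _⟩
  · exact ⟨Pi.single i 1, by simp [dp, single_dotProduct, hi]⟩

lemma exists_dp10 {u₁ u₂ : V m} (h1 : u₁ ≠ 0) (hne : u₁ ≠ u₂) :
    ∃ x : V m, x ⬝ᵥ u₁ = 1 ∧ x ⬝ᵥ u₂ = 0 := by
  obtain ⟨j, hj⟩ := exists_one h1
  rcases z2 (u₂ j) with h0 | h0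
  · exact ⟨Pi.single j 1, by simp [single_dotProduct, hj, h0]⟩
  · have hi : ∃ i, u₁ i ≠ u₂ i := by
      by_contra hc; push_neg at hc; exact hne (funext hc)
    obtain ⟨i, hi⟩ := hi
    rcases z2 (u₁ i) with h1i | h1i
    · have h2i : u₂ i = 1 := (z2 (u₂ i)).resolve_left (fun h => hi (h1i.trans h.symm))
      refine ⟨Pi.single i 1 + Pi.single j 1, ?_, ?_⟩
      · simp [add_dotProduct, single_dotProduct, hj, h1i]
      · have hij : i ≠ j := by rintro rfl; rw [hj] at h1i; exact one_ne_zero h1i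
        simp [add_dotProduct, single_dotProduct, h2i, h0]
        decide
    · have h2i : u₂ i = 0 := by
        rcases z2 (u₂ i) with h | h
        · exact h
        · exact absurd (h1i.trans h.symm) hi
      exact ⟨Pi.single i 1, by simp [single_dotProduct, h1i, h2i]⟩

lemma dp2_surj {u₁ u₂ : V m} (h1 : u₁ ≠ 0) (h2 : u₂ ≠ 0) (hne : u₁ ≠ u₂) :
    Function.Surjective (dp2 u₁ u₂) := by
  obtain ⟨x10, hx1, hx2⟩ := exists_dp10 h1 hne
  obtain ⟨x01, hy2, hy1⟩ := exists_dp10 h2 hne.symm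
  intro p
  have hp : p = (0, 0) ∨ p = (1, 0) ∨ p = (0, 1) ∨ p = (1, 1) := by
    rcases z2 p.1 with h | h <;> rcases z2 p.2 with h' | h' <;>
      [exact Or.inl (Prod.ext h h'); exact Or.inr (Or.inr (Or.inl (Prod.ext h h')));
       exact Or.inr (Or.inl (Prod.ext h h')); exact Or.inr (Or.inr (Or.inr (Prod.ext h h')))]
  rcases hp with rfl | rfl | rfl | rfl
  · exact ⟨0, map_zero _⟩
  · exact ⟨x10, Prod.ext hx1 hx2⟩
  · exact ⟨x01, Prod.ext hy1 hy2⟩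
  · refine ⟨x10 + x01, Prod.ext ?_ ?_⟩ <;>
      simp [dp2, add_dotProduct, hx1, hx2, hy1, hy2]

lemma cardV : Fintype.card (V m) = 2 ^ m := by
  simp [Fintype.card_fun]

lemma count1 (hm : 1 ≤ m) {u : V m} (hu : u ≠ 0) (c : ZMod 2) :
    (univ.filter (fun x : V m => x ⬝ᵥ u = c)).card = 2 ^ (m - 1) := by
  have h := card_fiber_mul (dp u) (dp_surj hu) c
  rw [Fintype.card_subtype] at h
  have hfil : (univ.filter (fun x : V m => dp u x = c)) = univ.filter (fun x : V m => x ⬝ᵥ u = c) := rfl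
  rw [hfil, cardV] at h
  have h2 : Fintype.card (ZMod 2) = 2 := rfl
  rw [h2] at h
  have : 2 ^ (m - 1) * 2 = 2 ^ m := by
    rw [← pow_succ]; congr 1; omega
  omega

lemma count2 (hm : 2 ≤ m) {u₁ u₂ : V m} (h1 : u₁ ≠ 0) (h2 : u₂ ≠ 0) (hne : u₁ ≠ u₂)
    (c₁ c₂ : ZMod 2) :
    (univ.filter (fun x : V m => x ⬝ᵥ u₁ = c₁ ∧ x ⬝ᵥ u₂ = c₂)).card = 2 ^ (m - 2) := by
  have h := card_fiber_mul (dp2 u₁ u₂) (dp2_surj h1 h2 hne) (c₁, c₂)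
  rw [Fintype.card_subtype] at h
  have hfil : (univ.filter (fun x : V m => dp2 u₁ u₂ x = (c₁, c₂)))
      = univ.filter (fun x : V m => x ⬝ᵥ u₁ = c₁ ∧ x ⬝ᵥ u₂ = c₂) := by
    apply Finset.filter_congr
    intro x _
    simp [dp2, Prod.ext_iff]
  rw [hfil, cardV] at h
  have h4 : Fintype.card (ZMod 2 × ZMod 2) = 4 := rfl
  rw [h4] at h
  have : 2 ^ (m - 2) * 4 = 2 ^ m := by
    have : 2 ^ (m - 2) * 4 = 2 ^ (m - 2) * 2 ^ 2 := rfl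
    rw [this, ← pow_add]; congr 1; omega
  omega


lemma adj_iff (p : V m × V m) (x y : V m) (hy : y ≠ p.2) :
    Adj m p (x, y) ↔ x ⬝ᵥ (p.2 + y) = p.1 ⬝ᵥ (p.2 + y) := by
  constructor
  · rintro ⟨h, -⟩
    rw [add_dotProduct] at h
    exact ((z2add _ _).1 h).symm
  · intro h
    exact ⟨by rw [add_dotProduct, z2add]; exact h.symm, Ne.symm hy⟩

lemma core (hm : 2 ≤ m) (v w : V m × V m) (hvw : v ≠ w) :
    Nat.card {z // Adj m v z ∧ Adj m w z} = 2 ^ (2 * m - 2) - 2 ^ (m - 1) := by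
  have e : {z : V m × V m // Adj m v z ∧ Adj m w z} ≃
      (Σ y : V m, {x : V m // Adj m v (x, y) ∧ Adj m w (x, y)}) :=
    { toFun := fun z => ⟨z.1.2, ⟨z.1.1, z.2⟩⟩,
      invFun := fun s => ⟨(s.2.1, s.1), s.2.2⟩,
      left_inv := fun z => rfl,
      right_inv := fun s => rfl }
  rw [Nat.card_eq_fintype_card, Fintype.card_congr e, Fintype.card_sigma]
  by_cases hb : v.2 = w.2
  · -- second coordinates equal; then v.1 ≠ w.1
    have ha : v.1 + w.1 ≠ 0 := by
      intro h
      exact hvw (Prod.ext (vadd_eq_zero.1 h) hb)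
    have inner : ∀ y : V m,
        Fintype.card {x : V m // Adj m v (x, y) ∧ Adj m w (x, y)}
          = if y ≠ v.2 ∧ (v.1 + w.1) ⬝ᵥ (v.2 + y) = 0 then 2 ^ (m - 1) else 0 := by
      intro y
      rw [Fintype.card_subtype]
      by_cases hy : y = v.2
      · rw [if_neg (by simp [hy])]
        rw [Finset.card_eq_zero, Finset.filter_eq_empty_iff]
        rintro x - ⟨⟨-, h⟩, -⟩
        exact h hy.symm
      · have hu : v.2 + y ≠ 0 := fun h => hy (vadd_eq_zero.1 h).symm
        have hfil : (univ.filter (fun x => Adj m v (x, y) ∧ Adj m w (x, y)))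
            = univ.filter (fun x : V m => x ⬝ᵥ (v.2 + y) = v.1 ⬝ᵥ (v.2 + y)
                ∧ x ⬝ᵥ (v.2 + y) = w.1 ⬝ᵥ (v.2 + y)) := by
          apply Finset.filter_congr
          intro x _
          rw [adj_iff v x y hy, adj_iff w x y (by rw [← hb]; exact hy), ← hb]
        by_cases hc : v.1 ⬝ᵥ (v.2 + y) = w.1 ⬝ᵥ (v.2 + y)
        · rw [if_pos ⟨hy, by rw [add_dotProduct, z2add]; exact hc⟩, hfil]
          have hfil2 : (univ.filter (fun x : V m => x ⬝ᵥ (v.2 + y) = v.1 ⬝ᵥ (v.2 + y)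
                ∧ x ⬝ᵥ (v.2 + y) = w.1 ⬝ᵥ (v.2 + y)))
              = univ.filter (fun x : V m => x ⬝ᵥ (v.2 + y) = v.1 ⬝ᵥ (v.2 + y)) := by
            apply Finset.filter_congr
            intro x _
            rw [← hc, and_self]
          rw [hfil2, count1 (by omega) hu]
        · rw [if_neg (fun hcon => hc (by
            have h2 := hcon.2
            rw [add_dotProduct] at h2
            exact (z2add _ _).1 h2)), hfil]
          rw [Finset.card_eq_zero, Finset.filter_eq_empty_iff]
          rintro x - ⟨h1, h2⟩
          exact hc (h1.symm.trans h2)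
    rw [Finset.sum_congr rfl (fun y _ => inner y), Finset.sum_ite, Finset.sum_const,
      Finset.sum_const_zero, add_zero, smul_eq_mul]
    have hcard : (univ.filter (fun y : V m => y ≠ v.2 ∧ (v.1 + w.1) ⬝ᵥ (v.2 + y) = 0)).card
        = 2 ^ (m - 1) - 1 := by
      have hbij : (univ.filter (fun y : V m => y ≠ v.2 ∧ (v.1 + w.1) ⬝ᵥ (v.2 + y) = 0)).card
          = (univ.filter (fun u : V m => u ≠ 0 ∧ (v.1 + w.1) ⬝ᵥ u = 0)).card := by
        apply Finset.card_bij' (fun y _ => v.2 + y) (fun u _ => v.2 + u)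
        · intro y hy
          simp only [Finset.mem_filter, Finset.mem_univ, true_and] at hy ⊢
          exact ⟨fun h => hy.1 (vadd_eq_zero.1 h).symm, hy.2⟩
        · intro u hu
          simp only [Finset.mem_filter, Finset.mem_univ, true_and] at hu ⊢
          constructor
          · intro h
            rw [add_eq_left] at h
            exact hu.1 h
          · rw [← add_assoc, vadd_self, zero_add]
            exact hu.2
        · intro y _
          rw [← add_assoc, vadd_self, zero_add]
        · intro u _
          rw [← add_assoc, vadd_self, zero_add]
      rw [hbij]
      have h0 : (0 : V m) ∈ univ.filter (fun u : V m => (v.1 + w.1) ⬝ᵥ u = 0) := by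
        simp
      have herase : (univ.filter (fun u : V m => u ≠ 0 ∧ (v.1 + w.1) ⬝ᵥ u = 0))
          = (univ.filter (fun u : V m => (v.1 + w.1) ⬝ᵥ u = 0)).erase 0 := by
        ext u
        simp only [Finset.mem_erase, Finset.mem_filter, Finset.mem_univ, true_and]
      rw [herase, Finset.card_erase_of_mem h0]
      congr 1
      rw [Finset.filter_congr (fun u _ => by rw [dotProduct_comm])]
      exact count1 (by omega) ha 0
    rw [hcard, Nat.sub_mul, one_mul]
    congr 1
    rw [← pow_add]
    congr 1
    omega
  · -- second coordinates different
    have inner : ∀ y : V m,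
        Fintype.card {x : V m // Adj m v (x, y) ∧ Adj m w (x, y)}
          = if y ≠ v.2 ∧ y ≠ w.2 then 2 ^ (m - 2) else 0 := by
      intro y
      rw [Fintype.card_subtype]
      by_cases hy1 : y = v.2
      · rw [if_neg (by simp [hy1])]
        rw [Finset.card_eq_zero, Finset.filter_eq_empty_iff]
        rintro x - ⟨⟨-, h⟩, -⟩
        exact h hy1.symm
      by_cases hy2 : y = w.2
      · rw [if_neg (by simp [hy2])]
        rw [Finset.card_eq_zero, Finset.filter_eq_empty_iff]
        rintro x - ⟨-, -, h⟩
        exact h hy2.symm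
      · rw [if_pos ⟨hy1, hy2⟩]
        have hu1 : v.2 + y ≠ 0 := fun h => hy1 (vadd_eq_zero.1 h).symm
        have hu2 : w.2 + y ≠ 0 := fun h => hy2 (vadd_eq_zero.1 h).symm
        have hu12 : v.2 + y ≠ w.2 + y := fun h => hb (add_right_cancel h)
        have hfil : (univ.filter (fun x => Adj m v (x, y) ∧ Adj m w (x, y)))
            = univ.filter (fun x : V m => x ⬝ᵥ (v.2 + y) = v.1 ⬝ᵥ (v.2 + y)
                ∧ x ⬝ᵥ (w.2 + y) = w.1 ⬝ᵥ (w.2 + y)) := by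
          apply Finset.filter_congr
          intro x _
          rw [adj_iff v x y hy1, adj_iff w x y hy2]
        rw [hfil, count2 hm hu1 hu2 hu12]
    rw [Finset.sum_congr rfl (fun y _ => inner y), Finset.sum_ite, Finset.sum_const,
      Finset.sum_const_zero, add_zero, smul_eq_mul]
    have hcard : (univ.filter (fun y : V m => y ≠ v.2 ∧ y ≠ w.2)).card = 2 ^ m - 2 := by
      have hset : (univ.filter (fun y : V m => y ≠ v.2 ∧ y ≠ w.2))
          = univ \ {v.2, w.2} := by
        ext y
        simp only [Finset.mem_filter, Finset.mem_univ, true_and, Finset.mem_sdiff,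
          Finset.mem_insert, Finset.mem_singleton]
        tauto
      rw [hset, Finset.card_sdiff_of_subset (Finset.subset_univ _), Finset.card_univ, cardV]
      congr 1
      rw [Finset.card_insert_of_notMem (by simpa using hb), Finset.card_singleton]
    rw [hcard, Nat.sub_mul]
    have h1 : 2 ^ m * 2 ^ (m - 2) = 2 ^ (2 * m - 2) := by
      rw [← pow_add]
      congr 1
      omega
    have h2 : 2 * 2 ^ (m - 2) = 2 ^ (m - 1) := by
      rw [← pow_succ']
      congr 1
      omega
    rw [h1, h2]

end BIK

theorem stmt10 (m : ℕ) (hm : 2 ≤ m) :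
    (∀ v w, Adj m v w →
      Nat.card {z // Adj m v z ∧ Adj m w z} = 2 ^ (2 * m - 2) - 2 ^ (m - 1)) ∧
    (∀ v w, v ≠ w → ¬ Adj m v w →
      Nat.card {z // Adj m v z ∧ Adj m w z} = 2 ^ (2 * m - 2) - 2 ^ (m - 1)) := by
  constructor
  · intro v w hadj
    obtain ⟨-, h2⟩ := hadj
    exact BIK.core hm v w (fun h => h2 (congrArg Prod.snd h))
  · intro v w hvw _
    exact BIK.core hm v w hvw
end

section
/- Let m ≥ 2, and define ρ₂ = {(v,w) : v+w ∈ S_m \ {0}}, ρ₃ = {(v,w) : v+w ∈ Q_m \ S_m}, ρ₄ = {(v,w) : v+w ∉ Q_m} on 𝔽₂^{2m}. Then for any (x,y) ∈ ρ₂ the number of z with (x,z) ∈ ρ₃ and (z,y) ∈ ρ₃ equals 2^{m-1}(2^{m-1} − 1), i.e., p₃₃² = 4θ(4θ−1) with θ = 2^{m-3}. -/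
open Matrix

lemma card_dot_zero {m : ℕ} (b : Fin m → ZMod 2) (hb : b ≠ 0) :
    Nat.card {a : Fin m → ZMod 2 // a ⬝ᵥ b = 0} = 2 ^ (m - 1) := by
  classical
  set f : (Fin m → ZMod 2) →+ ZMod 2 :=
    { toFun := fun a => a ⬝ᵥ b
      map_zero' := zero_dotProduct b
      map_add' := fun u v => add_dotProduct u v b } with hf
  have hsurj : Function.Surjective f := by
    intro v
    obtain ⟨i, hi⟩ := Function.ne_iff.mp hb
    have hbi : b i = 1 := by
      have : ∀ t : ZMod 2, t ≠ 0 → t = 1 := by decide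
      exact this _ (by simpa using hi)
    exact ⟨Pi.single i v, by simp [hf, single_dotProduct, hbi]⟩
  have e1 : {a : Fin m → ZMod 2 // a ⬝ᵥ b = 0} ≃ f.ker :=
    Equiv.subtypeEquivRight fun a => by simp [AddMonoidHom.mem_ker, hf]
  have e2 : ((Fin m → ZMod 2) ⧸ f.ker) ≃+ ZMod 2 :=
    QuotientAddGroup.quotientKerEquivOfSurjective f hsurj
  have hcard := AddSubgroup.card_eq_card_quotient_mul_card_addSubgroup f.ker
  rw [Nat.card_congr e2.toEquiv] at hcard
  have hdom : Nat.card (Fin m → ZMod 2) = 2 ^ m := by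
    simp [Nat.card_eq_fintype_card]
  have hz : Nat.card (ZMod 2) = 2 := by simp [Nat.card_eq_fintype_card]
  rw [hdom, hz] at hcard
  have hm : 1 ≤ m := by
    rcases Nat.eq_zero_or_pos m with h | h
    · subst h; exact absurd (Subsingleton.elim b 0) hb
    · exact h
  rw [Nat.card_congr e1]
  have hpow : 2 ^ m = 2 * 2 ^ (m - 1) := by
    rw [← pow_succ']
    congr 1
    omega
  omega

lemma card_ne_dot {m : ℕ} (c : Fin m → ZMod 2) (hc : c ≠ 0) :
    Nat.card {b : Fin m → ZMod 2 // b ≠ 0 ∧ c ⬝ᵥ b = 0} = 2 ^ (m - 1) - 1 := by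
  classical
  have h1 : Nat.card {b : Fin m → ZMod 2 // c ⬝ᵥ b = 0} = 2 ^ (m - 1) := by
    rw [Nat.card_congr (Equiv.subtypeEquivRight fun b => by
      rw [dotProduct_comm])]
    exact card_dot_zero c hc
  have hset : {b : Fin m → ZMod 2 | b ≠ 0 ∧ c ⬝ᵥ b = 0}
      = {b : Fin m → ZMod 2 | c ⬝ᵥ b = 0} \ {0} := by
    ext b; simp [and_comm]
  have : Nat.card {b : Fin m → ZMod 2 // b ≠ 0 ∧ c ⬝ᵥ b = 0}
      = ({b : Fin m → ZMod 2 | c ⬝ᵥ b = 0} \ {0}).ncard := by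
    rw [← Nat.card_coe_set_eq]
    exact Nat.card_congr (Equiv.subtypeEquivRight fun b => by
      simp [Set.mem_diff, and_comm])
  rw [this, Set.ncard_diff_singleton_of_mem (by simp),
    ← Nat.card_coe_set_eq]
  rw [show Nat.card {b : Fin m → ZMod 2 | c ⬝ᵥ b = 0} = 2 ^ (m-1) from h1]

theorem stmt13 (m : ℕ) (hm : 2 ≤ m)
    (x y : (Fin m → ZMod 2) × (Fin m → ZMod 2))
    (hxy : (x + y).2 = 0 ∧ x + y ≠ 0) :
    Nat.card {z : (Fin m → ZMod 2) × (Fin m → ZMod 2) //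
        ((x + z).1 ⬝ᵥ (x + z).2 = 0 ∧ (x + z).2 ≠ 0) ∧
        ((z + y).1 ⬝ᵥ (z + y).2 = 0 ∧ (z + y).2 ≠ 0)}
      = 2 ^ (m - 1) * (2 ^ (m - 1) - 1) := by
  classical
  obtain ⟨hc2, hc0⟩ := hxy
  have hc1 : (x + y).1 ≠ 0 := fun h => hc0 (Prod.ext h hc2)
  have haux : ∀ v : (Fin m → ZMod 2) × (Fin m → ZMod 2), v + v = 0 := by
    intro v
    ext i <;> exact CharTwo.add_self_eq_zero _
  have key : ∀ z : (Fin m → ZMod 2) × (Fin m → ZMod 2),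
      (((x + z).1 ⬝ᵥ (x + z).2 = 0 ∧ (x + z).2 ≠ 0) ∧
        ((z + y).1 ⬝ᵥ (z + y).2 = 0 ∧ (z + y).2 ≠ 0)) ↔
      ((x + z).1 ⬝ᵥ (x + z).2 = 0 ∧
        ((x + z).2 ≠ 0 ∧ (x + y).1 ⬝ᵥ (x + z).2 = 0)) := by
    intro z
    have hzy : z + y = (x + z) + (x + y) := by
      have : (x + z) + (x + y) = (x + x) + (z + y) := by abel
      rw [this, haux, zero_add]
    rw [hzy]
    simp only [Prod.snd_add, Prod.fst_add, hc2, add_zero, add_dotProduct]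
    constructor
    · rintro ⟨⟨hA, hB⟩, hC, -⟩
      exact ⟨hA, hB, by rwa [hA, zero_add] at hC⟩
    · rintro ⟨hA, hB, hC⟩
      exact ⟨⟨hA, hB⟩, by rw [hA, zero_add, hC], hB⟩
  have e1 : {z : (Fin m → ZMod 2) × (Fin m → ZMod 2) //
        ((x + z).1 ⬝ᵥ (x + z).2 = 0 ∧ (x + z).2 ≠ 0) ∧
        ((z + y).1 ⬝ᵥ (z + y).2 = 0 ∧ (z + y).2 ≠ 0)} ≃
      {p : (Fin m → ZMod 2) × (Fin m → ZMod 2) //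
        p.1 ⬝ᵥ p.2 = 0 ∧ (p.2 ≠ 0 ∧ (x + y).1 ⬝ᵥ p.2 = 0)} :=
    Equiv.subtypeEquiv (Equiv.addLeft x) (fun z => by simpa using key z)
  have e2 : {p : (Fin m → ZMod 2) × (Fin m → ZMod 2) //
        p.1 ⬝ᵥ p.2 = 0 ∧ (p.2 ≠ 0 ∧ (x + y).1 ⬝ᵥ p.2 = 0)} ≃
      (Σ b : {b : Fin m → ZMod 2 // b ≠ 0 ∧ (x + y).1 ⬝ᵥ b = 0},
        {a : Fin m → ZMod 2 // a ⬝ᵥ (b : Fin m → ZMod 2) = 0}) :=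
    { toFun := fun p => ⟨⟨p.1.2, p.2.2⟩, ⟨p.1.1, p.2.1⟩⟩
      invFun := fun q => ⟨(q.2.1, q.1.1), q.2.2, q.1.2⟩
      left_inv := fun p => rfl
      right_inv := fun q => rfl }
  rw [Nat.card_congr (e1.trans e2), Nat.card_eq_fintype_card, Fintype.card_sigma]
  have hterm : ∀ b : {b : Fin m → ZMod 2 // b ≠ 0 ∧ (x + y).1 ⬝ᵥ b = 0},
      Fintype.card {a : Fin m → ZMod 2 // a ⬝ᵥ (b : Fin m → ZMod 2) = 0}
        = 2 ^ (m - 1) := fun b => by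
    rw [← Nat.card_eq_fintype_card]; exact card_dot_zero b.1 b.2.1
  rw [Finset.sum_congr rfl (fun b _ => hterm b), Finset.sum_const, smul_eq_mul,
    Finset.card_univ, ← Nat.card_eq_fintype_card, card_ne_dot _ hc1, Nat.mul_comm]
end

section
/- Let m ≥ 2, and define ρ₃ = {(v,w) ∈ (𝔽₂^{2m})² : v+w ∈ Q_m \ S_m} and ρ₄ = {(v,w) : v+w ∉ Q_m}. Then for any (x,y) ∈ ρ₄, the number of z with (x,z) ∈ ρ₃ and (z,y) ∈ ρ₃ equals 2^{m-1}(2^{m-1} − 1). -/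
open Matrix Finset

private lemma zsq : ∀ u u' : ZMod 2, u + (u + u') = u' := by decide
private lemma zself : ∀ u : ZMod 2, u + u = 0 := by decide
private lemma zsq2 : ∀ u u' : ZMod 2, u + (u' + u) = u' := by decide
private lemma z01 : ∀ s : ZMod 2, s = 0 ∨ s = 1 := by decide

private lemma pair_exists {m : ℕ} (v w : Fin m → ZMod 2) (hw : w ≠ 0) (i : Fin m)
    (hvi : v i = 1) (hwi : w i = 0) :
    (∃ a, a ⬝ᵥ v = 1 ∧ a ⬝ᵥ w = 0) ∧ (∃ a, a ⬝ᵥ v = 0 ∧ a ⬝ᵥ w = 1) := by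
  obtain ⟨j, hj⟩ : ∃ j, w j ≠ 0 := Function.ne_iff.mp hw
  have hwj : w j = 1 := (z01 (w j)).resolve_left hj
  refine ⟨⟨Pi.single i 1, by simp [single_dotProduct, hvi, hwi]⟩, ?_⟩
  rcases z01 (v j) with h | h
  · exact ⟨Pi.single j 1, by simp [single_dotProduct, h, hwj]⟩
  · refine ⟨Pi.single i 1 + Pi.single j 1, ?_, ?_⟩ <;>
      simp [add_dotProduct, single_dotProduct, hvi, hwi, h, hwj] <;> decide

private lemma surj {m : ℕ} (v w : Fin m → ZMod 2) (hv : v ≠ 0) (hw : w ≠ 0) (hvw : v ≠ w) :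
    ∀ st : ZMod 2 × ZMod 2, ∃ a, a ⬝ᵥ v = st.1 ∧ a ⬝ᵥ w = st.2 := by
  obtain ⟨i, hi⟩ : ∃ i, v i ≠ w i := Function.ne_iff.mp hvw
  have key : (∃ a, a ⬝ᵥ v = 1 ∧ a ⬝ᵥ w = 0) ∧ (∃ a, a ⬝ᵥ v = 0 ∧ a ⬝ᵥ w = 1) := by
    rcases z01 (v i) with h1 | h1 <;> rcases z01 (w i) with h2 | h2
    · exact absurd (h1.trans h2.symm) hi
    · obtain ⟨⟨a1, ha1⟩, ⟨a2, ha2⟩⟩ := pair_exists w v hv i h2 h1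
      exact ⟨⟨a2, ha2.2, ha2.1⟩, ⟨a1, ha1.2, ha1.1⟩⟩
    · exact pair_exists v w hw i h1 h2
    · exact absurd (h1.trans h2.symm) hi
  obtain ⟨⟨a1, ha1⟩, ⟨a2, ha2⟩⟩ := key
  intro st
  rcases z01 st.1 with h1 | h1 <;> rcases z01 st.2 with h2 | h2
  · exact ⟨0, by simp [h1, h2]⟩
  · exact ⟨a2, by simp [h1, h2, ha2.1, ha2.2]⟩
  · exact ⟨a1, by simp [h1, h2, ha1.1, ha1.2]⟩
  · refine ⟨a1 + a2, ?_, ?_⟩ <;>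
      simp [add_dotProduct, ha1.1, ha1.2, ha2.1, ha2.2, h1, h2]

private lemma fiber_card {m : ℕ} (hm : 2 ≤ m) (v w : Fin m → ZMod 2) (hv : v ≠ 0)
    (hw : w ≠ 0) (hvw : v ≠ w) (s t : ZMod 2) :
    Fintype.card {a : Fin m → ZMod 2 // a ⬝ᵥ v = s ∧ a ⬝ᵥ w = t} = 2 ^ (m - 2) := by
  have hsurj := surj v w hv hw hvw
  have hcongr : ∀ s' t' : ZMod 2,
      Fintype.card {a : Fin m → ZMod 2 // a ⬝ᵥ v = s' ∧ a ⬝ᵥ w = t'}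
        = Fintype.card {a : Fin m → ZMod 2 // a ⬝ᵥ v = s ∧ a ⬝ᵥ w = t} := by
    intro s' t'
    obtain ⟨d, hd1, hd2⟩ := hsurj (s' + s, t' + t)
    have hdd : d + d = 0 := funext fun k => zself (d k)
    apply Fintype.card_congr
    refine ⟨fun a => ⟨a.1 + d, ?_, ?_⟩, fun a => ⟨a.1 + d, ?_, ?_⟩, ?_, ?_⟩
    · rw [add_dotProduct, a.2.1, hd1, zsq]
    · rw [add_dotProduct, a.2.2, hd2, zsq]
    · rw [add_dotProduct, a.2.1, hd1]; exact zsq2 s s'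
    · rw [add_dotProduct, a.2.2, hd2]; exact zsq2 t t'
    · intro a; apply Subtype.ext; simp [add_assoc, hdd]
    · intro a; apply Subtype.ext; simp [add_assoc, hdd]
  have hsum : Fintype.card (Fin m → ZMod 2)
      = ∑ st : ZMod 2 × ZMod 2, Fintype.card
          {a : Fin m → ZMod 2 // a ⬝ᵥ v = st.1 ∧ a ⬝ᵥ w = st.2} := by
    rw [← Fintype.card_sigma]
    exact Fintype.card_congr
      ((Equiv.sigmaFiberEquiv (fun a : Fin m → ZMod 2 => (a ⬝ᵥ v, a ⬝ᵥ w))).symm.trans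
        (Equiv.sigmaCongrRight fun st => Equiv.subtypeEquivRight fun a => by
          simp [Prod.ext_iff]))
  rw [Finset.sum_congr rfl (fun st _ => hcongr st.1 st.2), Finset.sum_const] at hsum
  simp only [Finset.card_univ] at hsum
  have hc4 : Fintype.card (ZMod 2 × ZMod 2) = 4 := by simp
  have hcm : Fintype.card (Fin m → ZMod 2) = 2 ^ m := by simp
  rw [hc4, hcm, smul_eq_mul] at hsum
  obtain ⟨k, rfl⟩ : ∃ k, m = k + 2 := ⟨m - 2, by omega⟩
  have : 2 ^ (k + 2) = 4 * 2 ^ k := by ring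
  simp only [Nat.add_sub_cancel]
  omega

private lemma zeq : ∀ u u' : ZMod 2, u + u' = 0 ↔ u = u' := by decide
private lemma zkey : ∀ A B C D : ZMod 2, D = 1 →
    ((A = 0 ∧ A + B + C + D = 0) ↔ (A = 0 ∧ B = 1 + C)) := by decide

private lemma veq {m : ℕ} (a b : Fin m → ZMod 2) : a + b = 0 ↔ a = b := by
  constructor
  · intro h; funext i; exact (zeq _ _).mp (congrFun h i)
  · rintro rfl; exact funext fun i => zself (a i)

private lemma count_pairs {m : ℕ} (hm : 2 ≤ m) (c1 c2 : Fin m → ZMod 2)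
    (hc : c1 ⬝ᵥ c2 = 1) :
    Fintype.card {u : (Fin m → ZMod 2) × (Fin m → ZMod 2) //
        (u.1 ⬝ᵥ u.2 = 0 ∧ u.2 ≠ 0) ∧ ((u.1 + c1) ⬝ᵥ (u.2 + c2) = 0 ∧ u.2 + c2 ≠ 0)}
      = (2 ^ m - 2) * 2 ^ (m - 2) := by
  have hc2 : c2 ≠ 0 := by rintro rfl; simp at hc
  have hexp : ∀ a b : Fin m → ZMod 2,
      (a + c1) ⬝ᵥ (b + c2) = a ⬝ᵥ b + a ⬝ᵥ c2 + c1 ⬝ᵥ b + c1 ⬝ᵥ c2 := by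
    intro a b; rw [add_dotProduct, dotProduct_add, dotProduct_add]; ring
  have hP : ∀ u : (Fin m → ZMod 2) × (Fin m → ZMod 2),
      ((u.1 ⬝ᵥ u.2 = 0 ∧ u.2 ≠ 0) ∧ ((u.1 + c1) ⬝ᵥ (u.2 + c2) = 0 ∧ u.2 + c2 ≠ 0))
      ↔ (((u.2, u.1).1 ≠ 0 ∧ (u.2, u.1).1 ≠ c2) ∧
          ((u.2, u.1).2 ⬝ᵥ (u.2, u.1).1 = 0 ∧
            (u.2, u.1).2 ⬝ᵥ c2 = 1 + c1 ⬝ᵥ (u.2, u.1).1)) := by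
    rintro ⟨a, b⟩
    simp only [hexp]
    constructor
    · rintro ⟨⟨h1, h2⟩, h3, h4⟩
      have h5 := (zkey _ _ _ _ hc).mp ⟨h1, h3⟩
      exact ⟨⟨h2, fun hb => h4 (by rw [hb]; exact funext fun i => zself (c2 i))⟩, h5⟩
    · rintro ⟨⟨h2, h4⟩, h1, h3⟩
      refine ⟨⟨h1, h2⟩, ((zkey _ _ _ _ hc).mpr ⟨h1, h3⟩).2, ?_⟩
      intro h; exact h4 ((veq b c2).mp h)
  rw [Fintype.card_congr ((Equiv.subtypeEquiv (Equiv.prodComm _ _) hP).trans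
    (Equiv.subtypeProdEquivSigmaSubtype fun b a =>
      (b ≠ 0 ∧ b ≠ c2) ∧ (a ⬝ᵥ b = 0 ∧ a ⬝ᵥ c2 = 1 + c1 ⬝ᵥ b)))]
  rw [Fintype.card_sigma]
  have hterm : ∀ b : Fin m → ZMod 2,
      Fintype.card {a // (b ≠ 0 ∧ b ≠ c2) ∧ (a ⬝ᵥ b = 0 ∧ a ⬝ᵥ c2 = 1 + c1 ⬝ᵥ b)}
        = if b ≠ 0 ∧ b ≠ c2 then 2 ^ (m - 2) else 0 := by
    intro b
    by_cases hb : b ≠ 0 ∧ b ≠ c2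
    · rw [if_pos hb, Fintype.card_congr (Equiv.subtypeEquivRight fun a =>
        and_iff_right hb)]
      exact fiber_card hm b c2 hb.1 hc2 hb.2 0 (1 + c1 ⬝ᵥ b)
    · rw [if_neg hb, Fintype.card_eq_zero_iff]
      exact ⟨fun a => hb a.2.1⟩
  rw [Finset.sum_congr rfl fun b _ => hterm b, ← Finset.sum_filter,
    Finset.sum_const, smul_eq_mul]
  congr 1
  have hset : Finset.filter (fun b : Fin m → ZMod 2 => b ≠ 0 ∧ b ≠ c2) Finset.univ
      = Finset.univ \ {0, c2} := by
    ext b; simp [not_or]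
  rw [hset, Finset.card_sdiff_of_subset (by simp)]
  rw [Finset.card_insert_of_notMem (by simpa using (Ne.symm hc2)), Finset.card_singleton]
  simp

open Matrix

theorem stmt14 (m : ℕ) (hm : 2 ≤ m)
    (x y : (Fin m → ZMod 2) × (Fin m → ZMod 2))
    (hxy : (x + y).1 ⬝ᵥ (x + y).2 ≠ 0) :
    Nat.card {z : (Fin m → ZMod 2) × (Fin m → ZMod 2) //
        ((x + z).1 ⬝ᵥ (x + z).2 = 0 ∧ (x + z).2 ≠ 0) ∧
        ((z + y).1 ⬝ᵥ (z + y).2 = 0 ∧ (z + y).2 ≠ 0)}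
      = 2 ^ (m - 1) * (2 ^ (m - 1) - 1) := by
  have hc : (x + y).1 ⬝ᵥ (x + y).2 = 1 := (z01 _).resolve_left hxy
  have hxx : x + x = 0 :=
    Prod.ext (funext fun i => zself (x.1 i)) (funext fun i => zself (x.2 i))
  have hkey : ∀ z : (Fin m → ZMod 2) × (Fin m → ZMod 2),
      (x + z) + (x + y) = z + y := by
    intro z; rw [add_add_add_comm, hxx, zero_add]
  have hkey2 : ∀ u : (Fin m → ZMod 2) × (Fin m → ZMod 2),
      x + u + y = u + (x + y) := by
    intro u; rw [← add_assoc, add_comm x u, add_assoc]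
  have e : {z : (Fin m → ZMod 2) × (Fin m → ZMod 2) //
        ((x + z).1 ⬝ᵥ (x + z).2 = 0 ∧ (x + z).2 ≠ 0) ∧
        ((z + y).1 ⬝ᵥ (z + y).2 = 0 ∧ (z + y).2 ≠ 0)} ≃
      {u : (Fin m → ZMod 2) × (Fin m → ZMod 2) //
        (u.1 ⬝ᵥ u.2 = 0 ∧ u.2 ≠ 0) ∧
        ((u.1 + (x + y).1) ⬝ᵥ (u.2 + (x + y).2) = 0 ∧ u.2 + (x + y).2 ≠ 0)} := by
    refine ⟨fun z => ⟨x + z.1, z.2.1, ?_, ?_⟩, fun u => ⟨x + u.1, ?_, ?_, ?_⟩, ?_, ?_⟩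
    · rw [show (x + z.1).1 + (x + y).1 = (z.1 + y).1 from congrArg Prod.fst (hkey z.1),
        show (x + z.1).2 + (x + y).2 = (z.1 + y).2 from congrArg Prod.snd (hkey z.1)]
      exact z.2.2.1
    · rw [show (x + z.1).2 + (x + y).2 = (z.1 + y).2 from congrArg Prod.snd (hkey z.1)]
      exact z.2.2.2
    · rw [show x + (x + u.1) = u.1 from by rw [← add_assoc, hxx, zero_add]]
      exact u.2.1
    · rw [show (x + u.1 + y).1 = u.1.1 + (x + y).1 from congrArg Prod.fst (hkey2 u.1),
        show (x + u.1 + y).2 = u.1.2 + (x + y).2 from congrArg Prod.snd (hkey2 u.1)]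
      exact u.2.2.1
    · rw [show (x + u.1 + y).2 = u.1.2 + (x + y).2 from congrArg Prod.snd (hkey2 u.1)]
      exact u.2.2.2
    · intro z; apply Subtype.ext; show x + (x + z.1) = z.1
      rw [← add_assoc, hxx, zero_add]
    · intro u; apply Subtype.ext; show x + (x + u.1) = u.1
      rw [← add_assoc, hxx, zero_add]
  rw [Nat.card_congr e, Nat.card_eq_fintype_card,
    count_pairs hm (x + y).1 (x + y).2 hc]
  obtain ⟨k, rfl⟩ : ∃ k, m = k + 2 := ⟨m - 2, by omega⟩
  have hn : 1 ≤ 2 ^ k := Nat.one_le_two_pow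
  have h1 : (2 : ℕ) ^ (k + 2) = 4 * 2 ^ k := by ring
  have h2 : (2 : ℕ) ^ (k + 2 - 1) = 2 * 2 ^ k := by
    rw [show k + 2 - 1 = k + 1 from rfl]; ring
  rw [Nat.add_sub_cancel, h1, h2, show 4 * 2 ^ k - 2 = 2 * (2 * 2 ^ k - 1) from by omega]
  ring
end

section
/- Let m ≥ 2 and define on V = 𝔽₂^{2m} the relations ρ₁ (equality), ρ₂ = {(v,w): v+w ∈ S_m\{0}}, ρ₃ = {(v,w): v+w ∈ Q_m\S_m}, ρ₄ = {(v,w): v+w ∉ Q_m}. Then (V; ρ₁,ρ₂,ρ₃,ρ₄) is a coherent configuration: the ρᵢ partition V×V, ρ₁ is the diagonal, each ρᵢ is symmetric, and for all i,j,k the number of z with (x,z) ∈ ρᵢ and (z,y) ∈ ρⱼ is the same for all (x,y) ∈ ρ_k. -/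
open Matrix

/-- The four basic relations `ρ₁, ρ₂, ρ₃, ρ₄` on `𝔽₂^{2m}`. -/
def rho (m : ℕ) : Fin 4 → ((Fin m → ZMod 2) × (Fin m → ZMod 2)) →
    ((Fin m → ZMod 2) × (Fin m → ZMod 2)) → Prop
  | 0 => fun x y => x = y
  | 1 => fun x y => (x + y).2 = 0 ∧ x + y ≠ 0
  | 2 => fun x y => (x + y).1 ⬝ᵥ (x + y).2 = 0 ∧ (x + y).2 ≠ 0
  | 3 => fun x y => (x + y).1 ⬝ᵥ (x + y).2 ≠ 0

namespace Stmt15Aux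

variable {m : ℕ}

abbrev V (m : ℕ) := (Fin m → ZMod 2) × (Fin m → ZMod 2)

def q (v : V m) : ZMod 2 := v.1 ⬝ᵥ v.2

def t (v : V m) : Fin 4 :=
  if v = 0 then 0 else if v.2 = 0 then 1 else if q v = 0 then 2 else 3

lemma fadd_self (x : Fin m → ZMod 2) : x + x = 0 :=
  funext fun i => CharTwo.add_self_eq_zero (x i)

lemma vadd_self (v : V m) : v + v = 0 :=
  Prod.ext (fadd_self _) (fadd_self _)

lemma q_of_snd_zero (v : V m) (h : v.2 = 0) : q v = 0 := by simp [q, h]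

lemma t_eq_zero_iff (v : V m) : t v = 0 ↔ v = 0 := by
  unfold t; split_ifs with ha hb hc <;> simp_all

lemma t_eq_one_iff (v : V m) : t v = 1 ↔ v.2 = 0 ∧ v ≠ 0 := by
  unfold t; split_ifs with ha hb hc <;> simp_all

lemma t_eq_two_iff (v : V m) : t v = 2 ↔ q v = 0 ∧ v.2 ≠ 0 := by
  unfold t; split_ifs with ha hb hc <;> simp_all [q_of_snd_zero]

lemma t_eq_three_iff (v : V m) : t v = 3 ↔ q v ≠ 0 := by
  unfold t; split_ifs with ha hb hc <;> simp_all [q_of_snd_zero]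

def Good (φ : V m → V m) : Prop :=
  Function.Bijective φ ∧ (∀ a b : V m, φ (a + b) = φ a + φ b) ∧ ∀ v, t (φ v) = t v

lemma Good.id : Good (id : V m → V m) := ⟨Function.bijective_id, fun _ _ => rfl, fun _ => rfl⟩

lemma Good.comp {φ ψ : V m → V m} (hφ : Good φ) (hψ : Good ψ) : Good (φ ∘ ψ) :=
  ⟨hφ.1.comp hψ.1, fun a b => by simp [Function.comp, hψ.2.1, hφ.2.1],
   fun v => by simp [Function.comp, hφ.2.2, hψ.2.2]⟩

lemma good_of_inv (φ : V m → V m) (hinv : Function.Involutive φ)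
    (hadd : ∀ a b : V m, φ (a + b) = φ a + φ b)
    (h2 : ∀ v : V m, v.2 = 0 → (φ v).2 = 0)
    (hq : ∀ v, q (φ v) = q v) : Good φ := by
  have hbij := hinv.bijective
  have hz : φ 0 = 0 := by
    have h := hadd 0 0
    rw [add_zero] at h
    exact (left_eq_add.mp h)
  have h0 : ∀ v : V m, φ v = 0 ↔ v = 0 := by
    intro v
    constructor
    · intro h; exact hbij.1 (h.trans hz.symm)
    · intro h; rw [h, hz]
  have h2' : ∀ v : V m, (φ v).2 = 0 ↔ v.2 = 0 := by
    intro v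
    constructor
    · intro h
      have := h2 (φ v) h
      rwa [hinv v] at this
    · exact h2 v
  refine ⟨hbij, hadd, fun v => ?_⟩
  simp only [t, h0 v, h2' v, hq v]

/-! ### Generators -/

def e (k : Fin m) : Fin m → ZMod 2 := Pi.single k 1

@[simp] lemma e_dot (k : Fin m) (y : Fin m → ZMod 2) : e k ⬝ᵥ y = y k := by
  simp [e, single_dotProduct]

@[simp] lemma dot_e (k : Fin m) (y : Fin m → ZMod 2) : y ⬝ᵥ e k = y k := by
  simp [e, dotProduct_single]

def swapMap (σ : Equiv.Perm (Fin m)) (v : V m) : V m := (v.1 ∘ σ, v.2 ∘ σ)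

lemma comp_dot (σ : Equiv.Perm (Fin m)) (x y : Fin m → ZMod 2) :
    (x ∘ σ) ⬝ᵥ (y ∘ σ) = x ⬝ᵥ y := by
  simp only [dotProduct, Function.comp_apply]
  exact Equiv.sum_comp σ (fun i => x i * y i)

lemma good_swapMap (σ : Equiv.Perm (Fin m)) (hσ : ∀ j, σ (σ j) = j) : Good (swapMap σ) := by
  refine good_of_inv _ ?_ ?_ ?_ ?_
  · intro v
    simp only [swapMap]
    refine Prod.ext ?_ ?_ <;> · funext j; simp [hσ j]
  · intro a b; rfl
  · intro v h; simp only [swapMap, h]; rfl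
  · intro v; exact comp_dot σ v.1 v.2

def shearMap (c : Fin m → ZMod 2) (k : Fin m) (v : V m) : V m :=
  (v.1 + v.1 k • c, v.2 + (c ⬝ᵥ v.2) • e k)

def shearMap' (c : Fin m → ZMod 2) (k : Fin m) (v : V m) : V m :=
  (v.1 + (c ⬝ᵥ v.1) • e k, v.2 + v.2 k • c)

def pairShear (u w : Fin m → ZMod 2) (v : V m) : V m :=
  (v.1 + (w ⬝ᵥ v.2) • u + (u ⬝ᵥ v.2) • w, v.2)

lemma two_smul_zero (a : ZMod 2) (x : Fin m → ZMod 2) : a • x + a • x = 0 := by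
  rw [← add_smul]
  have : a + a = 0 := CharTwo.add_self_eq_zero a
  rw [this, zero_smul]

lemma good_shearMap (c : Fin m → ZMod 2) (k : Fin m) (hc : c k = 0) :
    Good (shearMap c k) := by
  refine good_of_inv _ ?_ ?_ ?_ ?_
  · intro v
    simp only [shearMap]
    refine Prod.ext ?_ ?_
    · simp only [Pi.add_apply, Pi.smul_apply, smul_eq_mul, hc, mul_zero, add_zero]
      rw [add_assoc, two_smul_zero, add_zero]
    · simp only [dotProduct_add, dotProduct_smul, dot_e, hc, smul_eq_mul, mul_zero, add_zero]
      rw [add_assoc, two_smul_zero, add_zero]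
  · intro a b
    simp only [shearMap, Prod.fst_add, Prod.snd_add, Pi.add_apply, dotProduct_add]
    refine Prod.ext ?_ ?_ <;>
      · simp only [add_smul, Prod.fst_add, Prod.snd_add]; abel
  · intro v h
    simp only [shearMap, h, dotProduct_zero, zero_smul, add_zero]
  · intro v
    simp only [q, shearMap, add_dotProduct, dotProduct_add, smul_dotProduct, dotProduct_smul,
      dot_e, e_dot, smul_eq_mul, Pi.smul_apply]
    ring_nf
    simp [hc, CharTwo.two_eq_zero]

lemma good_shearMap' (c : Fin m → ZMod 2) (k : Fin m) (hc : c k = 0) :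
    Good (shearMap' c k) := by
  refine good_of_inv _ ?_ ?_ ?_ ?_
  · intro v
    simp only [shearMap']
    refine Prod.ext ?_ ?_
    · simp only [dotProduct_add, dotProduct_smul, dot_e, hc, smul_eq_mul, mul_zero, add_zero]
      rw [add_assoc, two_smul_zero, add_zero]
    · simp only [Pi.add_apply, Pi.smul_apply, smul_eq_mul, hc, mul_zero, add_zero]
      rw [add_assoc, two_smul_zero, add_zero]
  · intro a b
    simp only [shearMap', Prod.fst_add, Prod.snd_add, Pi.add_apply, dotProduct_add]
    refine Prod.ext ?_ ?_ <;>
      · simp only [add_smul, Prod.fst_add, Prod.snd_add]; abel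
  · intro v h
    simp only [shearMap', h, Pi.zero_apply, zero_smul, add_zero]
  · intro v
    simp only [q, shearMap', add_dotProduct, dotProduct_add, smul_dotProduct, dotProduct_smul,
      dot_e, e_dot, smul_eq_mul, Pi.smul_apply]
    ring_nf
    rw [dotProduct_comm c v.1]
    ring_nf
    simp [hc, CharTwo.two_eq_zero]

lemma good_pairShear (u w : Fin m → ZMod 2) : Good (pairShear u w) := by
  refine good_of_inv _ ?_ ?_ ?_ ?_
  · intro v
    simp only [pairShear]
    have h2 : ∀ z : Fin m → ZMod 2, 2 * z = 0 := fun z => funext fun i => by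
      simp [Pi.mul_apply, CharTwo.two_eq_zero]
    refine Prod.ext ?_ ?_
    · abel_nf
      simp [h2]
    · rfl
  · intro a b
    simp only [pairShear, Prod.fst_add, Prod.snd_add, dotProduct_add]
    refine Prod.ext ?_ ?_
    · simp only [add_smul, Prod.fst_add, Prod.snd_add]; abel
    · rfl
  · intro v h; exact h
  · intro v
    simp only [q, pairShear, add_dotProduct, smul_dotProduct, smul_eq_mul]
    ring_nf
    simp [CharTwo.two_eq_zero, mul_comm]

/-! ### Transitivity on classes -/

def rep (hm : 0 < m) : Fin 4 → V m
  | 0 => 0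
  | 1 => (e ⟨0, hm⟩, 0)
  | 2 => (0, e ⟨0, hm⟩)
  | 3 => (e ⟨0, hm⟩, e ⟨0, hm⟩)

lemma exists_good (hm : 0 < m) (v : V m) :
    ∃ φ : V m → V m, Good φ ∧ φ (rep hm (t v)) = v := by
  have zmod2 : ∀ a : ZMod 2, a ≠ 0 → a = 1 := by decide
  set z : Fin m := ⟨0, hm⟩ with hzdef
  by_cases h0 : v = 0
  · refine ⟨id, Good.id, ?_⟩
    have ht : t v = 0 := (t_eq_zero_iff v).mpr h0
    rw [ht, h0]; rfl
  by_cases h2 : v.2 = 0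
  · -- class 1
    have ht : t v = 1 := (t_eq_one_iff v).mpr ⟨h2, h0⟩
    have ha : v.1 ≠ 0 := fun h => h0 (Prod.ext h h2)
    obtain ⟨i, hi⟩ := Function.ne_iff.mp ha
    have hi1 : v.1 i = 1 := zmod2 _ (by simpa using hi)
    set σ := Equiv.swap z i with hσdef
    have hσ : ∀ j, σ (σ j) = j := fun j => Equiv.swap_apply_self _ _ _
    set c := v.1 ∘ σ + e z with hcdef
    have hc : c z = 0 := by
      simp [hcdef, hσdef, Equiv.swap_apply_left, hi1, e, Pi.single_eq_same,
        CharTwo.add_self_eq_zero]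
    refine ⟨swapMap σ ∘ shearMap c z, (good_swapMap σ hσ).comp (good_shearMap c z hc), ?_⟩
    rw [ht]
    show swapMap σ (shearMap c z (e z, 0)) = v
    have h1 : shearMap c z (e z, 0) = (v.1 ∘ σ, 0) := by
      simp only [shearMap]
      refine Prod.ext ?_ ?_
      · show e z + (e z) z • c = v.1 ∘ σ
        rw [show (e z) z = 1 by simp [e], one_smul, hcdef,
          add_comm (v.1 ∘ σ) (e z), ← add_assoc, fadd_self, zero_add]
      · show (0 : Fin m → ZMod 2) + (c ⬝ᵥ 0) • e z = 0
        simp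
    rw [h1]
    refine Prod.ext ?_ h2.symm
    show (v.1 ∘ σ) ∘ σ = v.1
    funext j
    simp [Function.comp, hσ j]
  -- classes 2 and 3: v.2 ≠ 0
  obtain ⟨i, hi⟩ := Function.ne_iff.mp h2
  have hi1 : v.2 i = 1 := zmod2 _ (by simpa using hi)
  set σ := Equiv.swap z i with hσdef
  have hσ : ∀ j, σ (σ j) = j := fun j => Equiv.swap_apply_self _ _ _
  set c := v.2 ∘ σ + e z with hcdef
  have hc : c z = 0 := by
    simp [hcdef, hσdef, Equiv.swap_apply_left, hi1, e, Pi.single_eq_same,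
      CharTwo.add_self_eq_zero]
  have hEzC : e z + c = v.2 ∘ σ := by
    rw [hcdef, add_comm (v.2 ∘ σ) (e z), ← add_assoc, fadd_self, zero_add]
  have hcomp : (v.2 ∘ σ) ∘ σ = v.2 := by
    funext j; simp [Function.comp, hσ j]
  by_cases hq : q v = 0
  · -- class 2
    have ht : t v = 2 := (t_eq_two_iff v).mpr ⟨hq, h2⟩
    refine ⟨pairShear v.1 (e i) ∘ swapMap σ ∘ shearMap' c z,
      (good_pairShear v.1 (e i)).comp ((good_swapMap σ hσ).comp (good_shearMap' c z hc)), ?_⟩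
    rw [ht]
    show pairShear v.1 (e i) (swapMap σ (shearMap' c z (0, e z))) = v
    have h1 : shearMap' c z (0, e z) = (0, v.2 ∘ σ) := by
      simp only [shearMap']
      refine Prod.ext ?_ ?_
      · show (0 : Fin m → ZMod 2) + (c ⬝ᵥ 0) • e z = 0
        simp
      · show e z + (e z) z • c = v.2 ∘ σ
        rw [show (e z) z = 1 by simp [e], one_smul, hEzC]
    rw [h1]
    have h2' : swapMap σ (0, v.2 ∘ σ) = (0, v.2) := by
      simp only [swapMap]
      refine Prod.ext ?_ hcomp
      rfl
    rw [h2']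
    simp only [pairShear]
    refine Prod.ext ?_ rfl
    show 0 + (e i ⬝ᵥ v.2) • v.1 + (v.1 ⬝ᵥ v.2) • e i = v.1
    rw [e_dot, hi1, one_smul, zero_add, show v.1 ⬝ᵥ v.2 = 0 from hq, zero_smul, add_zero]
  · -- class 3
    have ht : t v = 3 := (t_eq_three_iff v).mpr hq
    have hq1 : v.1 ⬝ᵥ v.2 = 1 := zmod2 _ hq
    refine ⟨pairShear (v.1 + e i) (e i) ∘ swapMap σ ∘ shearMap' c z,
      (good_pairShear _ _).comp ((good_swapMap σ hσ).comp (good_shearMap' c z hc)), ?_⟩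
    rw [ht]
    show pairShear (v.1 + e i) (e i) (swapMap σ (shearMap' c z (e z, e z))) = v
    have h1 : shearMap' c z (e z, e z) = (e z, v.2 ∘ σ) := by
      simp only [shearMap']
      refine Prod.ext ?_ ?_
      · show e z + (c ⬝ᵥ e z) • e z = e z
        rw [dot_e, hc, zero_smul, add_zero]
      · show e z + (e z) z • c = v.2 ∘ σ
        rw [show (e z) z = 1 by simp [e], one_smul, hEzC]
    rw [h1]
    have hez : e z ∘ σ = (e i : Fin m → ZMod 2) := by
      funext j
      by_cases hj : j = i
      · subst hj
        have hsj : σ j = z := by rw [hσdef]; exact Equiv.swap_apply_right _ _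
        show e z (σ j) = e j j
        rw [hsj]
        simp [e, Pi.single_eq_same]
      · have hne : σ j ≠ z := by
          intro h
          apply hj
          have := congrArg σ h
          rw [hσ j, hσdef, Equiv.swap_apply_left] at this
          exact this
        simp [Function.comp, e, Pi.single_eq_of_ne hne, Pi.single_eq_of_ne hj]
    have h2' : swapMap σ (e z, v.2 ∘ σ) = (e i, v.2) := by
      simp only [swapMap]
      exact Prod.ext hez hcomp
    rw [h2']
    simp only [pairShear]
    refine Prod.ext ?_ rfl
    show e i + (e i ⬝ᵥ v.2) • (v.1 + e i) + ((v.1 + e i) ⬝ᵥ v.2) • e i = v.1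
    rw [e_dot, hi1, one_smul, add_dotProduct, hq1, e_dot, hi1,
      show (1 : ZMod 2) + 1 = 0 by decide, zero_smul, add_zero,
      add_comm v.1 (e i), ← add_assoc, fadd_self, zero_add]

/-! ### Counting -/

noncomputable def cnt (i j : Fin 4) (v : V m) : ℕ := Nat.card {w : V m // t w = i ∧ t (w + v) = j}

lemma cnt_good (i j : Fin 4) {φ : V m → V m} (h : Good φ) (v : V m) :
    cnt i j (φ v) = cnt i j v := by
  refine (Nat.card_congr ?_).symm
  refine Equiv.subtypeEquiv (Equiv.ofBijective φ h.1) fun w => ?_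
  simp only [Equiv.ofBijective_apply]
  rw [h.2.2 w, ← h.2.1, h.2.2 (w + v)]

lemma rho_iff (i : Fin 4) (x y : V m) : rho m i x y ↔ t (x + y) = i := by
  have hxy : x + y = 0 ↔ x = y := by
    constructor
    · intro h
      have : x + (y + y) = 0 + y := by rw [← add_assoc, h]
      rwa [vadd_self, add_zero, zero_add] at this
    · intro h; rw [h]; exact vadd_self y
  match i with
  | 0 =>
    show x = y ↔ _
    rw [t_eq_zero_iff, hxy]
  | 1 =>
    show (x + y).2 = 0 ∧ x + y ≠ 0 ↔ _
    rw [t_eq_one_iff]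
  | 2 =>
    show (x + y).1 ⬝ᵥ (x + y).2 = 0 ∧ (x + y).2 ≠ 0 ↔ _
    rw [t_eq_two_iff]; rfl
  | 3 =>
    show (x + y).1 ⬝ᵥ (x + y).2 ≠ 0 ↔ _
    rw [t_eq_three_iff]; rfl

lemma card_eq_cnt (i j : Fin 4) (x y : V m) :
    Nat.card {z : V m // rho m i x z ∧ rho m j z y} = cnt i j (x + y) := by
  refine Nat.card_congr ?_
  refine Equiv.subtypeEquiv (Equiv.addLeft x) fun z => ?_
  have key : x + z + (x + y) = z + y := by
    rw [add_add_add_comm, vadd_self, zero_add]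
  rw [rho_iff i x z, rho_iff j z y]
  constructor
  · rintro ⟨h1, h2⟩
    exact ⟨h1, by rwa [show (Equiv.addLeft x) z + (x + y) = z + y from key]⟩
  · rintro ⟨h1, h2⟩
    exact ⟨h1, by rwa [show (Equiv.addLeft x) z + (x + y) = z + y from key] at h2⟩

end Stmt15Aux

open Stmt15Aux in
theorem stmt15 (m : ℕ) (hm : 2 ≤ m) :
    (∀ x y, ∃! i : Fin 4, rho m i x y) ∧
    (∀ x y, rho m 0 x y ↔ x = y) ∧
    (∀ i x y, rho m i x y ↔ rho m i y x) ∧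
    (∀ i j k : Fin 4, ∃ p : ℕ, ∀ x y, rho m k x y →
        Nat.card {z // rho m i x z ∧ rho m j z y} = p) := by
  have hm0 : 0 < m := lt_of_lt_of_le (by norm_num) hm
  refine ⟨?_, ?_, ?_, ?_⟩
  · intro x y
    refine ⟨t (x + y), (rho_iff _ x y).mpr rfl, fun i hi => ?_⟩
    exact ((rho_iff i x y).mp hi).symm
  · intro x y; exact Iff.rfl
  · intro i x y
    rw [rho_iff i x y, rho_iff i y x, add_comm]
  · intro i j k
    refine ⟨cnt i j (rep hm0 k), fun x y hk => ?_⟩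
    have htk : t (x + y) = k := (rho_iff k x y).mp hk
    obtain ⟨φ, hφ, hφv⟩ := exists_good hm0 (x + y)
    rw [card_eq_cnt i j x y, ← hφv, cnt_good i j hφ, htk]
end

section
/- Let m ≥ 4 and let Γ^{(m)} be the graph on 𝔽₂^m × 𝔽₂^m with (v₁,v₂) ~ (w₁,w₂) iff (v₁+w₁)ᵀ(v₂+w₂) = 0 and v₂ ≠ w₂. Then Γ^{(m)} is not 2-homogeneous: no automorphism of Γ^{(m)} maps the pair (0, (e₁,0)) to the pair (0, (e₁,e₁)). -/
open Matrix

/-! Auxiliary lemmas -/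

section Aux

variable {m : ℕ}

lemma exists_dot {m n : ℕ} (v : Fin n → (Fin m → ZMod 2))
    (hv : LinearIndependent (ZMod 2) v) (g : Fin n → ZMod 2) :
    ∃ z : Fin m → ZMod 2, ∀ i, v i ⬝ᵥ z = g i := by
  classical
  let B := Module.Basis.span hv
  let f0 : Submodule.span (ZMod 2) (Set.range v) →ₗ[ZMod 2] (ZMod 2) :=
    B.constr (ZMod 2) g
  obtain ⟨F, hF⟩ := LinearMap.exists_extend f0
  refine ⟨fun j => F (Pi.single j 1), fun i => ?_⟩
  have h1 : F (v i) = g i := by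
    have : v i = ((Submodule.span (ZMod 2) (Set.range v)).subtype) (B i) := by
      simp [B, Module.Basis.span_apply]
    rw [this, ← LinearMap.comp_apply, hF]
    simp [f0, B, Finsupp.single_apply]
  rw [← h1]
  have : v i = ∑ j, (v i j) • Pi.single j (1 : ZMod 2) := by
    funext k
    simp [Pi.single_apply, Finset.sum_apply, smul_eq_mul, mul_ite]
  conv_rhs => rw [this]
  rw [map_sum]
  simp [dotProduct, mul_comm]

lemma avoid (S : Submodule (ZMod 2) (Fin m → ZMod 2))
    (F : Finset (Fin m → ZMod 2)) (h : F.card < Nat.card S) :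
    ∃ v ∈ S, v ∉ F := by
  by_contra hc
  push_neg at hc
  have hsub : (S : Set (Fin m → ZMod 2)) ⊆ (F : Set _) := fun v hv => hc v hv
  have := Set.ncard_le_ncard hsub (F.finite_toSet)
  rw [Set.ncard_coe_finset] at this
  have : Nat.card S ≤ F.card := by
    rwa [← Nat.card_coe_set_eq] at this
  omega

lemma ker_card {k : ℕ} (φ : (Fin m → ZMod 2) →ₗ[ZMod 2] (Fin k → ZMod 2)) :
    2 ^ (m - k) ≤ Nat.card (LinearMap.ker φ) := by
  classical
  have hrn := LinearMap.finrank_range_add_finrank_ker φ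
  have h1 : Module.finrank (ZMod 2) (Fin m → ZMod 2) = m := by
    simp [Module.finrank_pi]
  have h2 : Module.finrank (ZMod 2) (LinearMap.range φ) ≤ k := by
    have := Submodule.finrank_le (LinearMap.range φ)
    simpa [Module.finrank_pi] using
      le_trans this (le_of_eq (by simp [Module.finrank_pi]))
  have h3 : m - k ≤ Module.finrank (ZMod 2) (LinearMap.ker φ) := by omega
  have : Nat.card (LinearMap.ker φ) =
      2 ^ Module.finrank (ZMod 2) (LinearMap.ker φ) := by
    have : Fintype (LinearMap.ker φ) := Fintype.ofFinite _
    rw [Nat.card_eq_fintype_card, Module.card_eq_pow_finrank (K := ZMod 2)]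
    simp [ZMod.card]
  rw [this]
  exact Nat.pow_le_pow_right (by norm_num) h3

lemma zmod2_cases : ∀ x : ZMod 2, x = 0 ∨ x = 1 := by decide

lemma add_self_zero (b : Fin m → ZMod 2) : b + b = 0 := by
  funext i
  have : ∀ x : ZMod 2, x + x = 0 := by decide
  exact this (b i)

lemma eq_of_add_eq_zero' {a b : Fin m → ZMod 2} (h : a + b = 0) : a = b := by
  have := add_self_zero b
  calc a = a + (b + b) := by rw [this, add_zero]
    _ = (a + b) + b := by ring
    _ = b := by rw [h, zero_add]

lemma li_pair {a b : Fin m → ZMod 2} (ha : a ≠ 0) (hb : b ≠ 0)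
    (hab : a ≠ b) : LinearIndependent (ZMod 2) ![a, b] := by
  rw [Fintype.linearIndependent_iff]
  intro g hg
  rw [Fin.sum_univ_two] at hg
  simp only [Matrix.cons_val_zero, Matrix.cons_val_one, Matrix.head_cons] at hg
  rcases zmod2_cases (g 0) with h0 | h0 <;> rcases zmod2_cases (g 1) with h1 | h1 <;>
    rw [h0, h1] at hg <;> simp only [one_smul, zero_smul, add_zero, zero_add] at hg
  · intro i; fin_cases i <;> assumption
  · exact absurd hg hb
  · exact absurd hg ha
  · exact absurd (eq_of_add_eq_zero' hg) hab

lemma li_triple {a b c : Fin m → ZMod 2} (ha : a ≠ 0) (hb : b ≠ 0)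
    (hc : c ≠ 0) (hab : a ≠ b) (hac : a ≠ c) (hbc : b ≠ c) (hs : a ≠ b + c) :
    LinearIndependent (ZMod 2) ![a, b, c] := by
  rw [Fintype.linearIndependent_iff]
  intro g hg
  rw [Fin.sum_univ_three] at hg
  simp only [Matrix.cons_val_zero, Matrix.cons_val_one, Matrix.head_cons,
    Matrix.cons_val_two, Matrix.tail_cons] at hg
  rcases zmod2_cases (g 0) with h0 | h0 <;> rcases zmod2_cases (g 1) with h1 | h1 <;>
      rcases zmod2_cases (g 2) with h2 | h2 <;>
    rw [h0, h1, h2] at hg <;>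
    simp only [one_smul, zero_smul, add_zero, zero_add] at hg
  · intro i; fin_cases i <;> assumption
  · exact absurd hg hc
  · exact absurd hg hb
  · exact absurd (eq_of_add_eq_zero' hg) hbc
  · exact absurd hg ha
  · exact absurd (eq_of_add_eq_zero' hg) hac
  · exact absurd (eq_of_add_eq_zero' hg) hab
  · exact absurd (eq_of_add_eq_zero' (by linear_combination hg) : a = b + c) hs

/-- dot product with a fixed vector as a linear map -/
def dotL (w : Fin m → ZMod 2) : (Fin m → ZMod 2) →ₗ[ZMod 2] ZMod 2 where
  toFun v := w ⬝ᵥ v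
  map_add' u v := dotProduct_add w u v
  map_smul' c v := by simp

lemma two_add_self (a : ZMod 2) : a + a = 0 := by revert a; decide

lemma indicator_eq_single (h : 0 < m) :
    (fun i : Fin m => if i.val = 0 then (1 : ZMod 2) else 0) =
      Pi.single (⟨0, h⟩ : Fin m) 1 := by
  funext i
  rw [Pi.single_apply]
  by_cases hi : i = ⟨0, h⟩
  · simp [hi]
  · have : i.val ≠ 0 := fun hc => hi (Fin.ext hc)
    simp [hi, this]

end Aux

lemma lemB {m : ℕ} (hm : 4 ≤ m)
    (z : (Fin m → ZMod 2) × (Fin m → ZMod 2))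
    (h0 : Adj m (0, 0) z)
    (hb : Adj m (Pi.single ⟨0, by omega⟩ 1, Pi.single ⟨0, by omega⟩ 1) z)
    (hx : Adj m (Pi.single ⟨0, by omega⟩ 1, Pi.single ⟨1, by omega⟩ 1) z)
    (hy : Adj m (0, Pi.single ⟨0, by omega⟩ 1 + Pi.single ⟨1, by omega⟩ 1) z) :
    False := by
  have i0 : (⟨0, by omega⟩ : Fin m) ≠ ⟨1, by omega⟩ := by
    intro h; exact absurd (congrArg Fin.val h) (by simp)
  set p := z.1 with hp
  set q := z.2 with hq
  have h0' : p ⬝ᵥ q = 0 := by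
    have := h0.1; simpa using this
  have hb' : (Pi.single ⟨0, by omega⟩ 1 + p) ⬝ᵥ (Pi.single ⟨0, by omega⟩ 1 + q) = 0 := hb.1
  have hx' : (Pi.single ⟨0, by omega⟩ 1 + p) ⬝ᵥ (Pi.single ⟨1, by omega⟩ 1 + q) = 0 := hx.1
  have hy' : p ⬝ᵥ (Pi.single ⟨0, by omega⟩ 1 + Pi.single ⟨1, by omega⟩ 1 + q) = 0 := by
    have := hy.1; simpa using this
  rw [add_dotProduct, dotProduct_add, dotProduct_add, single_dotProduct,
    single_dotProduct, dotProduct_single, h0', Pi.single_eq_same] at hb'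
  rw [add_dotProduct, dotProduct_add, dotProduct_add, single_dotProduct,
    single_dotProduct, dotProduct_single, h0',
    Pi.single_eq_of_ne i0] at hx'
  rw [dotProduct_add, dotProduct_add, dotProduct_single, dotProduct_single, h0'] at hy'
  simp only [one_mul, mul_one, add_zero, zero_add] at hb' hx' hy'
  have hadd : ∀ a b : ZMod 2, a + b = 0 → a = b := by decide
  rw [hadd _ _ hx', hadd _ _ hy'] at hb'
  have : ∀ c : ZMod 2, 1 + c + c = 0 → False := by decide
  exact this _ hb'
lemma lemA {m : ℕ} (hm : 4 ≤ m) (x y : (Fin m → ZMod 2) × (Fin m → ZMod 2))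
    (hx0 : Adj m (0, 0) x) (hxa : Adj m (Pi.single ⟨0, by omega⟩ 1, 0) x)
    (hy0 : Adj m (0, 0) y) (hya : Adj m (Pi.single ⟨0, by omega⟩ 1, 0) y)
    (hne : x ≠ y) (hnadj : ¬ Adj m x y) :
    ∃ z, Adj m (0, 0) z ∧ Adj m (Pi.single ⟨0, by omega⟩ 1, 0) z ∧
      Adj m x z ∧ Adj m y z := by
  classical
  have hx1 : x.1 ⬝ᵥ x.2 = 0 := by have := hx0.1; simpa using this
  have hx2 : x.2 ≠ 0 := fun h => hx0.2 h.symm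
  have hy1 : y.1 ⬝ᵥ y.2 = 0 := by have := hy0.1; simpa using this
  have hy2 : y.2 ≠ 0 := fun h => hy0.2 h.symm
  have hxe : x.2 ⟨0, by omega⟩ = 0 := by
    have h := hxa.1
    rw [add_dotProduct, zero_add, single_dotProduct, one_mul, hx1, add_zero] at h
    exact h
  have hye : y.2 ⟨0, by omega⟩ = 0 := by
    have h := hya.1
    rw [add_dotProduct, zero_add, single_dotProduct, one_mul, hy1, add_zero] at h
    exact h
  -- choose z₂ (by cases), obtaining the needed properties
  obtain ⟨z2, hz20, hz2ne, hz2x, hz2y, hconsx, hconsy⟩ :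
      ∃ z2 : Fin m → ZMod 2, z2 ⟨0, by omega⟩ = 0 ∧ z2 ≠ 0 ∧ z2 ≠ x.2 ∧ z2 ≠ y.2 ∧
        (∃ z1, z1 ⬝ᵥ z2 = 0 ∧ x.2 ⬝ᵥ z1 = x.1 ⬝ᵥ z2 ∧ y.2 ⬝ᵥ z1 = y.1 ⬝ᵥ z2) ∧ True := by
    have hadd : ∀ a b : ZMod 2, a + b = 0 → a = b := by decide
    by_cases h : x.2 = y.2
    · -- same second coordinate
      set w := x.1 + y.1 with hw
      have hwne : w ≠ 0 := by
        intro h0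
        apply hne
        have h1 : x.1 = y.1 := by
          funext i
          exact hadd _ _ (congrFun h0 i)
        exact Prod.ext h1 h
      set φ : (Fin m → ZMod 2) →ₗ[ZMod 2] (Fin 2 → ZMod 2) :=
        LinearMap.pi ![LinearMap.proj ⟨0, by omega⟩, dotL w] with hφ
      have hcard : ({0, x.2} : Finset (Fin m → ZMod 2)).card < Nat.card (LinearMap.ker φ) := by
        have h1 : ({0, x.2} : Finset (Fin m → ZMod 2)).card ≤ 2 := by
          apply le_trans (Finset.card_insert_le _ _); simp
        have h2 := ker_card φ
        have h3 : (4 : ℕ) ≤ 2 ^ (m - 2) := by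
          calc (4:ℕ) = 2 ^ 2 := rfl
          _ ≤ 2 ^ (m - 2) := Nat.pow_le_pow_right (by norm_num) (by omega)
        omega
      obtain ⟨z2, hz2mem, hz2F⟩ := avoid _ _ hcard
      rw [LinearMap.mem_ker] at hz2mem
      have hz20 : z2 ⟨0, by omega⟩ = 0 := by
        have := congrFun hz2mem 0
        simpa [hφ, LinearMap.pi_apply] using this
      have hzw : w ⬝ᵥ z2 = 0 := by
        have := congrFun hz2mem 1
        simpa [hφ, LinearMap.pi_apply, dotL] using this
      simp only [Finset.mem_insert, Finset.mem_singleton, not_or] at hz2F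
      obtain ⟨hz2ne, hz2x⟩ := hz2F
      have heq : x.1 ⬝ᵥ z2 = y.1 ⬝ᵥ z2 := by
        apply hadd
        rw [← add_dotProduct]; exact hzw
      obtain ⟨z1, hz1⟩ := exists_dot ![z2, x.2] (li_pair hz2ne hx2 hz2x)
        ![0, x.1 ⬝ᵥ z2]
      have e0 := hz1 0
      have e1 := hz1 1
      simp only [Matrix.cons_val_zero, Matrix.cons_val_one, Matrix.head_cons] at e0 e1
      exact ⟨z2, hz20, hz2ne, hz2x, h ▸ hz2x, ⟨z1, by rw [dotProduct_comm]; exact e0,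
        e1, by rw [← h, e1, heq]⟩, trivial⟩
    · -- different second coordinates
      set φ : (Fin m → ZMod 2) →ₗ[ZMod 2] (Fin 1 → ZMod 2) :=
        LinearMap.pi (fun _ => LinearMap.proj ⟨0, by omega⟩) with hφ
      have hcard : ({0, x.2, y.2, x.2 + y.2} : Finset (Fin m → ZMod 2)).card <
          Nat.card (LinearMap.ker φ) := by
        have h1 : ({0, x.2, y.2, x.2 + y.2} : Finset (Fin m → ZMod 2)).card ≤ 4 := by
          apply le_trans (Finset.card_insert_le _ _)
          have : ({x.2, y.2, x.2 + y.2} : Finset (Fin m → ZMod 2)).card ≤ 3 := by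
            apply le_trans (Finset.card_insert_le _ _)
            have : ({y.2, x.2 + y.2} : Finset (Fin m → ZMod 2)).card ≤ 2 := by
              apply le_trans (Finset.card_insert_le _ _); simp
            omega
          omega
        have h2 := ker_card φ
        have h3 : (8 : ℕ) ≤ 2 ^ (m - 1) := by
          calc (8:ℕ) = 2 ^ 3 := rfl
          _ ≤ 2 ^ (m - 1) := Nat.pow_le_pow_right (by norm_num) (by omega)
        omega
      obtain ⟨z2, hz2mem, hz2F⟩ := avoid _ _ hcard
      rw [LinearMap.mem_ker] at hz2mem
      have hz20 : z2 ⟨0, by omega⟩ = 0 := by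
        have := congrFun hz2mem 0
        simpa [hφ, LinearMap.pi_apply] using this
      simp only [Finset.mem_insert, Finset.mem_singleton, not_or] at hz2F
      obtain ⟨hz2ne, hz2x, hz2y, hz2s⟩ := hz2F
      obtain ⟨z1, hz1⟩ := exists_dot ![z2, x.2, y.2]
        (li_triple hz2ne hx2 hy2 hz2x hz2y h hz2s)
        ![0, x.1 ⬝ᵥ z2, y.1 ⬝ᵥ z2]
      have e0 := hz1 0
      have e1 := hz1 1
      have e2 := hz1 2
      simp only [Matrix.cons_val_zero, Matrix.cons_val_one, Matrix.head_cons,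
        Matrix.cons_val_two, Matrix.tail_cons] at e0 e1 e2
      exact ⟨z2, hz20, hz2ne, hz2x, hz2y, ⟨z1, by rw [dotProduct_comm]; exact e0,
        e1, e2⟩, trivial⟩
  obtain ⟨z1, hzz, hzx, hzy⟩ := hconsx
  refine ⟨(z1, z2), ⟨by simpa using hzz, fun h => hz2ne h.symm⟩,
    ⟨?_, fun h => hz2ne h.symm⟩, ⟨?_, fun h => hz2x h.symm⟩, ⟨?_, fun h => hz2y h.symm⟩⟩
  · rw [add_dotProduct, zero_add, single_dotProduct, one_mul, hzz, add_zero]; exact hz20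
  · show (x.1 + z1) ⬝ᵥ (x.2 + z2) = 0
    rw [add_dotProduct, dotProduct_add, dotProduct_add, hx1, hzz,
      dotProduct_comm z1 x.2, hzx]
    simpa using two_add_self (x.1 ⬝ᵥ z2)
  · show (y.1 + z1) ⬝ᵥ (y.2 + z2) = 0
    rw [add_dotProduct, dotProduct_add, dotProduct_add, hy1, hzz,
      dotProduct_comm z1 y.2, hzy]
    simpa using two_add_self (y.1 ⬝ᵥ z2)

theorem stmt16 (m : ℕ) (hm : 4 ≤ m) :
    ¬ ∃ f : (Fin m → ZMod 2) × (Fin m → ZMod 2) →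
            (Fin m → ZMod 2) × (Fin m → ZMod 2),
        Function.Bijective f ∧ (∀ u w, Adj m (f u) (f w) ↔ Adj m u w) ∧
        f (0, 0) = (0, 0) ∧
        f ((fun i => if i.val = 0 then 1 else 0), 0)
          = ((fun i => if i.val = 0 then 1 else 0),
             (fun i => if i.val = 0 then 1 else 0)) := by
  rintro ⟨f, ⟨finj, fsurj⟩, hadj, h0, ha⟩
  have hmpos : 0 < m := by omega
  rw [indicator_eq_single hmpos] at ha
  set E1 : Fin m → ZMod 2 := Pi.single ⟨0, hmpos⟩ 1 with hE1
  set E2 : Fin m → ZMod 2 := Pi.single ⟨1, by omega⟩ 1 with hE2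
  have i01 : (⟨0, hmpos⟩ : Fin m) ≠ ⟨1, by omega⟩ := by
    intro h; exact absurd (congrArg Fin.val h) (by simp)
  have hE1v : E1 ⟨0, hmpos⟩ = 1 := by rw [hE1, Pi.single_eq_same]
  have hE2v0 : E2 ⟨0, hmpos⟩ = 0 := by rw [hE2]; exact Pi.single_eq_of_ne i01 1
  have hE1v1 : E1 ⟨1, by omega⟩ = 0 := by rw [hE1]; exact Pi.single_eq_of_ne i01.symm 1
  have hE2v1 : E2 ⟨1, by omega⟩ = 1 := by rw [hE2, Pi.single_eq_same]
  -- the witnesses in the common neighbourhood of (0,0) and (E1,E1)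
  set X : (Fin m → ZMod 2) × (Fin m → ZMod 2) := (E1, E2) with hX
  set Y : (Fin m → ZMod 2) × (Fin m → ZMod 2) := (0, E1 + E2) with hY
  -- preimages
  obtain ⟨x0, hx0⟩ := fsurj X
  obtain ⟨y0, hy0⟩ := fsurj Y
  -- adjacency facts about X and Y
  have adj0X : Adj m (0, 0) X := by
    constructor
    · show (0 + E1) ⬝ᵥ (0 + E2) = 0
      rw [zero_add, zero_add, hE1, single_dotProduct, one_mul]
      exact hE2v0
    · show (0 : Fin m → ZMod 2) ≠ E2
      intro h
      have := congrFun h ⟨1, by omega⟩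
      rw [hE2v1] at this
      simp at this
  have adjbX : Adj m (E1, E1) X := by
    constructor
    · show (E1 + E1) ⬝ᵥ (E1 + E2) = 0
      rw [add_self_zero, zero_dotProduct]
    · show E1 ≠ E2
      intro h
      have := congrFun h ⟨0, hmpos⟩
      rw [hE1v, hE2v0] at this
      simp at this
  have adj0Y : Adj m (0, 0) Y := by
    constructor
    · show (0 + 0) ⬝ᵥ (0 + (E1 + E2)) = 0
      rw [add_zero, zero_dotProduct]
    · show (0 : Fin m → ZMod 2) ≠ E1 + E2
      intro h
      have := congrFun h ⟨0, hmpos⟩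
      rw [Pi.add_apply, hE1v, hE2v0] at this
      simp at this
  have adjbY : Adj m (E1, E1) Y := by
    constructor
    · show (E1 + 0) ⬝ᵥ (E1 + (E1 + E2)) = 0
      have : E1 + (E1 + E2) = E2 := by
        rw [← add_assoc, add_self_zero, zero_add]
      rw [this, add_zero, hE1, single_dotProduct, one_mul]
      exact hE2v0
    · show E1 ≠ E1 + E2
      intro h
      have := congrFun h ⟨1, by omega⟩
      rw [Pi.add_apply, hE1v1, hE2v1] at this
      simp at this
  have hXY : X ≠ Y := by
    intro h
    rw [hX, hY, Prod.mk.injEq] at h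
    have h2 := congrFun h.2 ⟨0, hmpos⟩
    rw [hE2v0, Pi.add_apply, hE1v, hE2v0] at h2
    simp at h2
  have hnadjXY : ¬ Adj m X Y := by
    rintro ⟨h1, -⟩
    rw [show X.1 = E1 from rfl, show X.2 = E2 from rfl,
      show Y.1 = 0 from rfl, show Y.2 = E1 + E2 from rfl] at h1
    rw [add_zero] at h1
    have : E2 + (E1 + E2) = E1 := by
      rw [add_comm E1 E2, ← add_assoc, add_self_zero, zero_add]
    rw [this, hE1, single_dotProduct, one_mul, Pi.single_eq_same] at h1
    simp at h1
  -- transport to preimages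
  have adj0x0 : Adj m (0, 0) x0 := (hadj _ _).mp (by rw [h0, hx0]; exact adj0X)
  have adjax0 : Adj m (E1, 0) x0 := (hadj _ _).mp (by
    rw [ha, hx0]; exact adjbX)
  have adj0y0 : Adj m (0, 0) y0 := (hadj _ _).mp (by rw [h0, hy0]; exact adj0Y)
  have adjay0 : Adj m (E1, 0) y0 := (hadj _ _).mp (by
    rw [ha, hy0]; exact adjbY)
  have hne : x0 ≠ y0 := fun h => hXY (by rw [← hx0, ← hy0, h])
  have hnadj : ¬ Adj m x0 y0 := fun h => hnadjXY (by
    rw [← hx0, ← hy0]; exact (hadj _ _).mpr h)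
  -- apply lemma A
  obtain ⟨z, hz0, hza, hzx, hzy⟩ := lemA hm x0 y0 adj0x0 adjax0 adj0y0 adjay0 hne hnadj
  -- push forward with f and contradict lemma B
  apply lemB hm (f z)
  · rw [← h0]; exact (hadj _ _).mpr hz0
  · show Adj m (E1, E1) (f z)
    rw [← ha]; exact (hadj _ _).mpr hza
  · show Adj m X (f z)
    rw [← hx0]; exact (hadj _ _).mpr hzx
  · show Adj m Y (f z)
    rw [← hy0]; exact (hadj _ _).mpr hzy
end

section
/- Let m ≥ 2 and u ∈ 𝔽₂^m with u ≠ 0. The number of symmetric m×m matrices S over 𝔽₂ with zero diagonal satisfying S·u = 0 equals 2^{m(m-1)/2 − (m−1)}. -/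
open Matrix

lemma doubleSumZero {ι : Type*} [Fintype ι] [DecidableEq ι]
    (T : Matrix ι ι (ZMod 2)) (hs : T.IsSymm) (hd : ∀ i, T i i = 0)
    (v : ι → ZMod 2) : ∑ j, ∑ l, T j l * v l * v j = 0 := by
  rw [← Finset.sum_product']
  refine Finset.sum_involution (fun p _ => (p.2, p.1)) ?_ ?_
    (fun p hp => Finset.mem_univ _) (fun p hp => rfl)
  · rintro ⟨a, b⟩ _
    have h : T b a = T a b := hs.apply a b
    simp only [h]
    rw [show T a b * v a * v b = T a b * v b * v a by ring, CharTwo.add_self_eq_zero]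
  · rintro ⟨a, b⟩ _ hf
    simp only [ne_eq, Prod.mk.injEq, not_and]
    intro hba hab
    apply hf
    subst hab
    simp [hd a]

/-- The set of symmetric zero-diagonal matrices is in bijection with
functions on non-diagonal `Sym2` elements. -/
noncomputable def symEquiv (ι : Type*) [Fintype ι] [DecidableEq ι] :
    {S : Matrix ι ι (ZMod 2) // S.IsSymm ∧ ∀ i, S i i = 0} ≃
      ({a : Sym2 ι // ¬ a.IsDiag} → ZMod 2) where
  toFun S a := Sym2.lift ⟨fun i j => S.1 i j, fun i j => S.2.1.apply j i⟩ a.1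
  invFun f := ⟨Matrix.of fun i j =>
      if h : i = j then 0 else f ⟨s(i, j), by simp [Sym2.mk_isDiag_iff, h]⟩,
    by
      ext i j
      simp only [Matrix.transpose_apply, Matrix.of_apply]
      by_cases h : i = j
      · subst h; simp
      · rw [dif_neg h, dif_neg (Ne.symm h)]
        exact congrArg f (Subtype.ext (Sym2.eq_swap)),
    fun i => by simp⟩
  left_inv := by
    rintro ⟨S, hs, hd⟩
    ext i j
    simp only [Matrix.of_apply]
    by_cases h : i = j
    · subst h; simp [hd i]
    · rw [dif_neg h]; rfl
  right_inv := by
    intro f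
    funext a
    obtain ⟨a, ha⟩ := a
    induction a using Sym2.ind with
    | _ i j =>
      have hij : i ≠ j := by simpa [Sym2.mk_isDiag_iff] using ha
      simp only [Sym2.lift_mk, Matrix.of_apply, dif_neg hij]

lemma card_symm_zero_diag (ι : Type*) [Fintype ι] [DecidableEq ι] :
    Nat.card {S : Matrix ι ι (ZMod 2) // S.IsSymm ∧ ∀ i, S i i = 0} =
      2 ^ (Fintype.card ι).choose 2 := by
  rw [Nat.card_congr (symEquiv ι), Nat.card_fun]
  congr 1
  · simp [Nat.card_eq_fintype_card]
  · rw [Nat.card_eq_fintype_card, Sym2.card_subtype_not_diag]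

section Ext

variable {m : ℕ} (k : Fin m) (u : Fin m → ZMod 2)

/-- the determined column -/
def colf (T : Matrix {j : Fin m // j ≠ k} {j : Fin m // j ≠ k} (ZMod 2))
    (i : {j : Fin m // j ≠ k}) : ZMod 2 :=
  ∑ j, T i j * u j.1

/-- extension of a matrix on the complement of `k` -/
def extMat (T : Matrix {j : Fin m // j ≠ k} {j : Fin m // j ≠ k} (ZMod 2)) :
    Matrix (Fin m) (Fin m) (ZMod 2) :=
  Matrix.of fun i j =>
    if hi : i = k then (if hj : j = k then 0 else colf k u T ⟨j, hj⟩)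
    else if hj : j = k then colf k u T ⟨i, hi⟩ else T ⟨i, hi⟩ ⟨j, hj⟩

variable (T : Matrix {j : Fin m // j ≠ k} {j : Fin m // j ≠ k} (ZMod 2))

lemma extMat_kk : extMat k u T k k = 0 := by simp [extMat]

lemma extMat_k_apply (j : Fin m) (hj : j ≠ k) :
    extMat k u T k j = colf k u T ⟨j, hj⟩ := by
  simp [extMat, dif_neg hj]

lemma extMat_apply_k (i : Fin m) (hi : i ≠ k) :
    extMat k u T i k = colf k u T ⟨i, hi⟩ := by
  simp [extMat, dif_neg hi]

lemma extMat_apply (i j : Fin m) (hi : i ≠ k) (hj : j ≠ k) :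
    extMat k u T i j = T ⟨i, hi⟩ ⟨j, hj⟩ := by
  simp [extMat, dif_neg hi, dif_neg hj]

lemma sum_split (k : Fin m) (f : Fin m → ZMod 2) :
    ∑ j, f j = f k + ∑ j : {j : Fin m // j ≠ k}, f j.1 := by
  rw [← Finset.add_sum_erase Finset.univ f (Finset.mem_univ k)]
  congr 1
  exact Finset.sum_subtype (Finset.univ.erase k)
    (fun x => by simp [Finset.mem_erase]) f

end Ext

theorem stmt19 (m : ℕ) (hm : 2 ≤ m) (u : Fin m → ZMod 2) (hu : u ≠ 0) :
    Nat.card {S : Matrix (Fin m) (Fin m) (ZMod 2) //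
        S.IsSymm ∧ (∀ i, S i i = 0) ∧ S.mulVec u = 0}
      = 2 ^ (m * (m - 1) / 2 - (m - 1)) := by
  classical
  obtain ⟨k, hk⟩ : ∃ k, u k ≠ 0 := by
    by_contra h
    push_neg at h
    exact hu (funext h)
  have hone : ∀ x : ZMod 2, x ≠ 0 → x = 1 := by decide
  have hk1 : u k = 1 := hone _ hk
  have E : {S : Matrix (Fin m) (Fin m) (ZMod 2) //
        S.IsSymm ∧ (∀ i, S i i = 0) ∧ S.mulVec u = 0} ≃
      {T : Matrix {j : Fin m // j ≠ k} {j : Fin m // j ≠ k} (ZMod 2) //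
        T.IsSymm ∧ ∀ i, T i i = 0} := by
    refine
      { toFun := fun S => ⟨Matrix.of fun i j => S.1 i.1 j.1, ?_, ?_⟩
        invFun := fun T => ⟨extMat k u T.1, ?_, ?_, ?_⟩
        left_inv := ?_
        right_inv := ?_ }
    · ext i j
      simp only [Matrix.transpose_apply, Matrix.of_apply]
      exact S.2.1.apply _ _
    · intro i
      exact S.2.2.1 i.1
    -- extMat is symmetric
    · obtain ⟨T, hTs, hTd⟩ := T
      ext i j
      simp only [Matrix.transpose_apply]
      by_cases hi : i = k <;> by_cases hj : j = k
      · rw [hi, hj]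
      · rw [hi, extMat_apply_k k u T j hj, extMat_k_apply k u T j hj]
      · rw [hj, extMat_k_apply k u T i hi, extMat_apply_k k u T i hi]
      · rw [extMat_apply k u T j i hj hi, extMat_apply k u T i j hi hj]
        exact hTs.apply _ _
    -- zero diagonal
    · obtain ⟨T, hTs, hTd⟩ := T
      intro i
      by_cases hi : i = k
      · rw [hi]; exact extMat_kk k u T
      · rw [extMat_apply k u T i i hi hi]
        exact hTd _
    -- mulVec u = 0
    · obtain ⟨T, hTs, hTd⟩ := T
      funext i
      show ∑ j, extMat k u T i j * u j = 0
      rw [sum_split k]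
      by_cases hi : i = k
      · rw [hi, extMat_kk k u T, zero_mul, zero_add]
        have step : ∀ j : {j : Fin m // j ≠ k},
            extMat k u T k j.1 * u j.1 = colf k u T j * u j.1 := by
          rintro ⟨j, hj⟩
          rw [extMat_k_apply k u T j hj]
        rw [Finset.sum_congr rfl fun j _ => step j]
        calc ∑ j : {j : Fin m // j ≠ k}, colf k u T j * u j.1
            = ∑ j : {j : Fin m // j ≠ k},
                ∑ l : {j : Fin m // j ≠ k}, T j l * u l.1 * u j.1 := by
              simp only [colf, Finset.sum_mul]
          _ = 0 := doubleSumZero T hTs hTd (fun j => u j.1)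
      · rw [extMat_apply_k k u T i hi, hk1, mul_one]
        have step : ∀ j : {j : Fin m // j ≠ k},
            extMat k u T i j.1 * u j.1 = T ⟨i, hi⟩ j * u j.1 := by
          rintro ⟨j, hj⟩
          rw [extMat_apply k u T i j hi hj]
        rw [Finset.sum_congr rfl fun j _ => step j]
        show colf k u T ⟨i, hi⟩ + colf k u T ⟨i, hi⟩ = 0
        exact CharTwo.add_self_eq_zero _
    -- left_inv
    · rintro ⟨S, hSs, hSd, hSv⟩
      ext i j
      have key : ∀ i : Fin m, ∀ hi : i ≠ k,
          colf k u (Matrix.of fun a b : {j : Fin m // j ≠ k} => S a.1 b.1) ⟨i, hi⟩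
            = S i k := by
        intro i hi
        have h0 : ∑ j, S i j * u j = 0 := congrFun hSv i
        rw [sum_split k, hk1, mul_one, CharTwo.add_eq_iff_eq_add, zero_add] at h0
        exact h0.symm
      show extMat k u _ i j = S i j
      by_cases hi : i = k <;> by_cases hj : j = k
      · rw [hi, hj, extMat_kk, hSd k]
      · rw [hi, extMat_k_apply k u _ j hj, key j hj, hSs.apply]
      · rw [hj, extMat_apply_k k u _ i hi, key i hi]
      · rw [extMat_apply k u _ i j hi hj]
        rfl
    -- right_inv
    · rintro ⟨T, hTs, hTd⟩
      ext i j
      show extMat k u T i.1 j.1 = T i j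
      rw [extMat_apply k u T i.1 j.1 i.2 j.2]
  rw [Nat.card_congr E, card_symm_zero_diag]
  congr 1
  have hcard : Fintype.card {j : Fin m // j ≠ k} = m - 1 := by
    rw [Fintype.card_subtype_compl, Fintype.card_subtype_eq, Fintype.card_fin]
  rw [hcard, Nat.choose_two_right]
  obtain ⟨n, rfl⟩ : ∃ n, m = n + 2 := ⟨m - 2, by omega⟩
  obtain ⟨a, ha⟩ : ∃ a, n * (n + 1) = 2 * a := (Nat.even_mul_succ_self n).exists_two_nsmul _
  have e1 : n + 2 - 1 = n + 1 := by omega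
  have e2 : n + 1 - 1 = n := by omega
  rw [e1, e2, show (n + 1) * n = 2 * a by rw [mul_comm]; exact ha,
    show (n + 2) * (n + 1) = 2 * a + 2 * (n + 1) by rw [← ha]; ring]
  omega
end
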